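/- arXiv:1811.08528 — 10 statements merged into one kernel-verified Lean document; each statement's English description precedes it below -/
import Mathlib

section
/- With posterior terms as above and a bijection $\sigma:[2N]\to\Pi$, for any bijection $\sigma$ there exists a subset $A\subseteq[N]$ such that $A$ and $\sigma$ are posterior-respecting; moreover the number of such subsets $A$ equals $2^c$, where $c$ is the number of connected components of the graph $\mathcal{G}_\sigma$. -/
open scoped Classical

noncomputable section

/-- The posterior term: `(k, false) ↦ ε·p(k)` and `(k, true) ↦ (1-ε)·p(k)`. -/
def pt (N : ℕ) (p : Fin N → ℝ) (ε : ℝ) : Fin N × Bool → ℝ :=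
  fun x => (if x.2 then 1 - ε else ε) * p x.1

/-- The set `Π` of all `2N` posterior terms. -/
def PiAll (N : ℕ) (p : Fin N → ℝ) (ε : ℝ) : Set ℝ := Set.range (pt N p ε)

/-- The posterior set `Π_A^1 = {(1-ε)p(k) : k ∈ A} ∪ {ε p(k) : k ∉ A}`. -/
def Pi1 (N : ℕ) (p : Fin N → ℝ) (ε : ℝ) (A : Finset (Fin N)) : Set ℝ :=
  {x | ∃ k : Fin N, (k ∈ A ∧ x = pt N p ε (k, true)) ∨ (k ∉ A ∧ x = pt N p ε (k, false))}

/-- The posterior set `Π_A^0 = Π \ Π_A^1`. -/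
def Pi0 (N : ℕ) (p : Fin N → ℝ) (ε : ℝ) (A : Finset (Fin N)) : Set ℝ :=
  PiAll N p ε \ Pi1 N p ε A

/-- The posterior set `Π_A^y`. -/
def PiY (N : ℕ) (p : Fin N → ℝ) (ε : ℝ) (A : Finset (Fin N)) (y : Bool) : Set ℝ :=
  if y then Pi1 N p ε A else Pi0 N p ε A

/-- Index `2k-1` (1-based), i.e. `2k` (0-based), of the `k`-th σ-sibling pair. -/
def i0 {N : ℕ} (k : Fin N) : Fin (2 * N) := ⟨2 * k.1, by have := k.isLt; omega⟩

/-- Index `2k` (1-based), i.e. `2k+1` (0-based), of the `k`-th σ-sibling pair. -/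
def i1 {N : ℕ} (k : Fin N) : Fin (2 * N) := ⟨2 * k.1 + 1, by have := k.isLt; omega⟩

/-- `A` and the bijection `σ : [2N] → Π` are posterior-respecting: no σ-sibling pair
`{σ(2k-1), σ(2k)}` is contained in a single posterior set `Π_A^y`. -/
def PR (N : ℕ) (p : Fin N → ℝ) (ε : ℝ) (σ : Fin (2 * N) → ℝ) (A : Finset (Fin N)) : Prop :=
  ∀ (k : Fin N) (y : Bool), ¬(({σ (i0 k), σ (i1 k)} : Set ℝ) ⊆ PiY N p ε A y)

/-- The graph `𝒢_σ` on the posterior terms (identified with their indices in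
`Fin N × Bool` via the injection `pt`), with posterior-sibling edges (same `k`)
and σ-sibling edges (`{σ(2k-1), σ(2k)}`). -/
def Gsig (N : ℕ) (p : Fin N → ℝ) (ε : ℝ) (σ : Fin (2 * N) → ℝ) :
    SimpleGraph (Fin N × Bool) :=
  SimpleGraph.fromRel (fun u v => u.1 = v.1 ∨ ∃ k : Fin N,
    ({pt N p ε u, pt N p ε v} : Set ℝ) = {σ (i0 k), σ (i1 k)})

/-- The zigzag partition: indices that are odd in the 1-based ordering
(`k.1` even in the 0-based ordering). -/
def AZZ (N : ℕ) : Finset (Fin N) := Finset.univ.filter (fun k => k.1 % 2 = 0)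

/-- The number of proper 2-colorings of a graph which is the union of two
fixed-point-free involutive perfect matchings `s` and `t` equals `2 ^ c`. -/
theorem card_proper {V : Type*} [Finite V] (G : SimpleGraph V) (s t : Equiv.Perm V)
    (hs2 : ∀ v, s (s v) = v) (ht2 : ∀ v, t (t v) = v)
    (hs1 : ∀ v, s v ≠ v) (ht1 : ∀ v, t v ≠ v)
    (hadj : ∀ u v, G.Adj u v ↔ u ≠ v ∧ (v = s u ∨ v = t u)) :
    Nonempty ({χ : V → Bool // ∀ v, χ (s v) ≠ χ v ∧ χ (t v) ≠ χ v}
      ≃ (G.ConnectedComponent → Bool)) := by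
  classical
  cases nonempty_fintype V
  set φ : Equiv.Perm V := t * s with hφ
  have hφ_apply : ∀ v, φ v = t (s v) := fun v => rfl
  have key : ∀ n : ℕ, ∀ v, (φ ^ n) v ≠ s v := by
    intro n
    induction n using Nat.strong_induction_on with
    | _ n ih =>
      match n with
      | 0 => intro v h; simp only [pow_zero, Equiv.Perm.coe_one, id_eq] at h
             exact hs1 v h.symm
      | 1 => intro v h
             rw [pow_one, hφ_apply] at h
             exact ht1 (s v) h
      | (n+2) =>
        intro v h
        have h1 : (φ ^ (n+1)) (φ v) = s v := by
          rw [pow_succ, Equiv.Perm.mul_apply] at h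
          exact h
        have h2 : s v = t (φ v) := by rw [hφ_apply, ht2]
        rw [h2] at h1
        have h3 : φ ((φ ^ n) (φ v)) = t (φ v) := by
          rw [pow_succ', Equiv.Perm.mul_apply] at h1
          exact h1
        rw [hφ_apply] at h3
        have h4 : s ((φ ^ n) (φ v)) = φ v := t.injective h3
        have h5 : (φ ^ n) (φ v) = s (φ v) := by
          have := congrArg s h4
          rwa [hs2] at this
        exact ih n (by omega) (φ v) h5
  have keyZ : ∀ (z : ℤ) (v), (φ ^ z) v ≠ s v := by
    intro z v h
    rcases le_or_gt 0 z with hz | hz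
    · lift z to ℕ using hz
      rw [zpow_natCast] at h
      exact key z v h
    · have h2 : (φ ^ (-z)) (s v) = v := by
        rw [← h, ← Equiv.Perm.mul_apply, ← zpow_add, neg_add_cancel, zpow_zero]
        rfl
      have h3 : (φ ^ (-z).toNat) (s v) = s (s v) := by
        rw [hs2]
        rw [← zpow_natCast, Int.toNat_of_nonneg (by omega)]
        exact h2
      exact key _ (s v) h3
  have noSC : ∀ v, ¬ φ.SameCycle v (s v) := by
    rintro v ⟨z, h⟩
    exact keyZ z v h
  let ι : V ≃ Fin (Fintype.card V) := Fintype.equivFin V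
  let orb : V → Finset V := fun v => Finset.univ.filter (fun w => φ.SameCycle v w)
  have horb : ∀ v, v ∈ orb v := fun v => by
    simp only [orb, Finset.mem_filter, Finset.mem_univ, true_and]
    exact Equiv.Perm.SameCycle.refl _ _
  have horbc : ∀ v w, φ.SameCycle v w → orb v = orb w := by
    intro v w hvw
    ext a
    simp only [orb, Finset.mem_filter, Finset.mem_univ, true_and]
    exact ⟨fun h => hvw.symm.trans h, fun h => hvw.trans h⟩
  let μ : V → ℕ := fun v => ((orb v).image (fun w => (ι w : ℕ))).min'
    ⟨(ι v : ℕ), Finset.mem_image_of_mem _ (horb v)⟩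
  have hμc : ∀ v w, φ.SameCycle v w → μ v = μ w := by
    intro v w h
    simp only [μ, horbc v w h]
  have hμne : ∀ v, μ v ≠ μ (s v) := by
    intro v h
    have h1 : μ v ∈ (orb v).image (fun w => (ι w : ℕ)) := Finset.min'_mem _ _
    have h2 : μ (s v) ∈ (orb (s v)).image (fun w => (ι w : ℕ)) := Finset.min'_mem _ _
    rw [← h] at h2
    rw [Finset.mem_image] at h1 h2
    obtain ⟨a, ha, ha2⟩ := h1
    obtain ⟨b, hb, hb2⟩ := h2
    have hab : a = b := by
      apply ι.injective
      apply Fin.ext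
      rw [ha2, hb2]
    simp only [orb, Finset.mem_filter, Finset.mem_univ, true_and] at ha hb
    subst hab
    exact noSC v (ha.trans hb.symm)
  let π : V → Bool := fun v => decide (μ v < μ (s v))
  have hπs : ∀ v, π (s v) = !π v := by
    intro v
    simp only [π, hs2]
    rcases lt_trichotomy (μ v) (μ (s v)) with h | h | h
    · simp [h, not_lt_of_gt h, le_of_lt h, not_lt.mpr (le_of_lt h)]
    · exact absurd h (hμne v)
    · simp [h, not_lt_of_gt h, le_of_lt h, not_lt.mpr (le_of_lt h)]
  have hπφ : ∀ v, π (φ v) = π v := by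
    intro v
    have e1 : μ (φ v) = μ v := (hμc v (φ v) ⟨1, by simp⟩).symm
    have e2 : s (φ v) = φ⁻¹ (s v) := by
      apply φ.injective
      rw [show φ (φ⁻¹ (s v)) = s v from φ.apply_symm_apply (s v), hφ_apply, hφ_apply, hs2, ht2]
    have e3 : μ (s (φ v)) = μ (s v) := by
      rw [e2]
      exact (hμc (s v) (φ⁻¹ (s v)) ⟨-1, by simp⟩).symm
    simp only [π, e1, e3]
  have hπt : ∀ v, π (t v) = !π v := by
    intro v
    have : t v = φ (s v) := by rw [hφ_apply, hs2]
    rw [this, hπφ, hπs]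
  have hadjS : ∀ v, G.Adj v (s v) := fun v => (hadj v (s v)).mpr ⟨(hs1 v).symm, Or.inl rfl⟩
  have hadjT : ∀ v, G.Adj v (t v) := fun v => (hadj v (t v)).mpr ⟨(ht1 v).symm, Or.inr rfl⟩
  have const : ∀ (χ : V → Bool), (∀ v, χ (s v) ≠ χ v ∧ χ (t v) ≠ χ v) →
      ∀ v w, G.Reachable v w → xor (χ v) (π v) = xor (χ w) (π w) := by
    intro χ hχ v w hr
    obtain ⟨pth⟩ := hr
    induction pth with
    | nil => rfl
    | cons hadj' p ih =>
      rename_i a b c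
      refine Eq.trans ?_ ih
      obtain ⟨hne, hor | hor⟩ := (hadj a b).mp hadj'
      · subst hor
        have h1 : χ (s a) = !χ a := by
          have := (hχ a).1; revert this; cases χ (s a) <;> cases χ a <;> simp
        rw [h1, hπs]
        cases χ a <;> cases π a <;> rfl
      · subst hor
        have h1 : χ (t a) = !χ a := by
          have := (hχ a).2; revert this; cases χ (t a) <;> cases χ a <;> simp
        rw [h1, hπt]
        cases χ a <;> cases π a <;> rfl
  have hmkS : ∀ v, G.connectedComponentMk (s v) = G.connectedComponentMk v :=
    fun v => SimpleGraph.ConnectedComponent.sound (hadjS v).symm.reachable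
  have hmkT : ∀ v, G.connectedComponentMk (t v) = G.connectedComponentMk v :=
    fun v => SimpleGraph.ConnectedComponent.sound (hadjT v).symm.reachable
  refine ⟨{
    toFun := fun χ c => xor (χ.1 c.out) (π c.out)
    invFun := fun d => ⟨fun v => xor (d (G.connectedComponentMk v)) (π v), ?_⟩
    left_inv := ?_
    right_inv := ?_ }⟩
  · intro v
    constructor
    · show xor (d (G.connectedComponentMk (s v))) (π (s v)) ≠
        xor (d (G.connectedComponentMk v)) (π v)
      rw [hmkS, hπs]; cases d (G.connectedComponentMk v) <;> cases π v <;> simp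
    · show xor (d (G.connectedComponentMk (t v))) (π (t v)) ≠
        xor (d (G.connectedComponentMk v)) (π v)
      rw [hmkT, hπt]; cases d (G.connectedComponentMk v) <;> cases π v <;> simp
  · rintro ⟨χ, hχ⟩
    apply Subtype.ext
    funext v
    simp only
    have hreach : G.Reachable (G.connectedComponentMk v).out v := by
      rw [← SimpleGraph.ConnectedComponent.eq]
      exact (G.connectedComponentMk v).out_eq
    rw [const χ hχ _ v hreach]
    cases χ v <;> cases π v <;> rfl
  · intro d
    funext c
    simp only
    have hc : G.connectedComponentMk (Quot.out c) = c := c.out_eq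
    rw [hc]
    cases d c <;> cases π c.out <;> rfl

/-- The swap-within-a-pair function on `Fin (2 * N)`. -/
def swF (N : ℕ) : Fin (2 * N) → Fin (2 * N) :=
  fun j => ⟨2 * (j.1 / 2) + (1 - j.1 % 2), by have := j.isLt; omega⟩

lemma swF_inv (N : ℕ) : Function.Involutive (swF N) := by
  intro j; apply Fin.ext; simp only [swF]; omega

/-- The posterior-sibling involution on `Fin N × Bool`. -/
def sE (N : ℕ) : Equiv.Perm (Fin N × Bool) :=
  ⟨fun v => (v.1, !v.2), fun v => (v.1, !v.2), fun v => by simp, fun v => by simp⟩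

/-- **(Statement 5.)** For any bijection `σ : [2N] → Π` there exists a partition `A`
which is posterior-respecting with `σ`; moreover the number of such `A` is `2 ^ c`,
where `c` is the number of connected components of `𝒢_σ`. -/
theorem stmt5 (N : ℕ) (hN : 1 ≤ N) (p : Fin N → ℝ) (hp : ∀ k, p k ∈ Set.Ioo (0:ℝ) 1)
    (hsum : ∑ k, p k = 1) (ε : ℝ) (hε0 : 0 < ε) (hε : ε < 1 / 2)
    (hinj : Function.Injective (pt N p ε))
    (σ : Fin (2 * N) → ℝ) (hσinj : Function.Injective σ)
    (hσr : Set.range σ = PiAll N p ε) :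
    (∃ A : Finset (Fin N), PR N p ε σ A) ∧
      Nat.card {A : Finset (Fin N) // PR N p ε σ A} =
        2 ^ Nat.card (Gsig N p ε σ).ConnectedComponent := by
  classical
  -- build the bijection e : Fin (2N) ≃ Fin N × Bool with pt (e j) = σ j
  have hex : ∀ j : Fin (2 * N), ∃ v : Fin N × Bool, pt N p ε v = σ j := by
    intro j
    have : σ j ∈ PiAll N p ε := hσr ▸ Set.mem_range_self j
    exact this
  choose f hf using hex
  have hfinj : Function.Injective f := by
    intro j j' h
    apply hσinj
    rw [← hf j, ← hf j', h]
  have hfsurj : Function.Surjective f := by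
    intro v
    have : pt N p ε v ∈ Set.range σ := by
      rw [hσr]; exact ⟨v, rfl⟩
    obtain ⟨j, hj⟩ := this
    exact ⟨j, hinj ((hf j).trans hj)⟩
  let e : Fin (2 * N) ≃ (Fin N × Bool) := Equiv.ofBijective f ⟨hfinj, hfsurj⟩
  have he : ∀ j, pt N p ε (e j) = σ j := hf
  -- the σ-sibling involution
  let tE : Equiv.Perm (Fin N × Bool) := (e.symm.trans (swF_inv N).toPerm).trans e
  have htE : ∀ v, tE v = e (swF N (e.symm v)) := fun v => rfl
  have ht2 : ∀ v, tE (tE v) = v := by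
    intro v
    rw [htE, htE, Equiv.symm_apply_apply, swF_inv N, Equiv.apply_symm_apply]
  have ht1 : ∀ v, tE v ≠ v := by
    intro v h
    rw [htE] at h
    have h2 : swF N (e.symm v) = e.symm v := by
      have := congrArg e.symm h
      rwa [Equiv.symm_apply_apply] at this
    have h3 := congrArg Fin.val h2
    simp only [swF] at h3
    omega
  have hs2 : ∀ v, (sE N) ((sE N) v) = v := fun v => by simp [sE]
  have hs1 : ∀ v, (sE N) v ≠ v := by
    rintro ⟨k, b⟩ h
    have := congrArg Prod.snd h
    simp [sE] at this
  -- index bookkeeping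
  have sw_i0 : ∀ k : Fin N, swF N (i0 k) = i1 k := by
    intro k
    apply Fin.ext
    simp only [swF, i0, i1]
    omega
  have sw_i1 : ∀ k : Fin N, swF N (i1 k) = i0 k := by
    intro k
    apply Fin.ext
    simp only [swF, i0, i1]
    omega
  have hj : ∀ j : Fin (2 * N), ∃ k : Fin N,
      (j = i0 k ∧ swF N j = i1 k) ∨ (j = i1 k ∧ swF N j = i0 k) := by
    intro j
    have hlt := j.isLt
    refine ⟨⟨j.1 / 2, by omega⟩, ?_⟩
    rcases Nat.mod_two_eq_zero_or_one j.1 with h | h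
    · left
      constructor <;> (apply Fin.ext; simp only [swF, i0, i1]; omega)
    · right
      constructor <;> (apply Fin.ext; simp only [swF, i0, i1]; omega)
  -- the coloring associated to a subset A
  let col : Finset (Fin N) → (Fin N × Bool) → Bool := fun A v => decide (v.1 ∈ A) == v.2
  have mem_Pi1 : ∀ (A : Finset (Fin N)) (v : Fin N × Bool),
      pt N p ε v ∈ Pi1 N p ε A ↔ col A v = true := by
    intro A v
    constructor
    · rintro ⟨k, ⟨hk, hpe⟩ | ⟨hk, hpe⟩⟩
      · obtain rfl := hinj hpe
        simp [col, hk]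
      · obtain rfl := hinj hpe
        simp [col, hk]
    · obtain ⟨k, b⟩ := v
      intro h
      cases b
      · have hk : k ∉ A := by simpa [col] using h
        exact ⟨k, Or.inr ⟨hk, rfl⟩⟩
      · have hk : k ∈ A := by simpa [col] using h
        exact ⟨k, Or.inl ⟨hk, rfl⟩⟩
  have mem_Pi0 : ∀ (A : Finset (Fin N)) (v : Fin N × Bool),
      pt N p ε v ∈ Pi0 N p ε A ↔ col A v = false := by
    intro A v
    rw [Pi0, Set.mem_diff]
    have hall : pt N p ε v ∈ PiAll N p ε := ⟨v, rfl⟩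
    rw [mem_Pi1]
    simp [hall]
  have hPiY1 : ∀ A, PiY N p ε A true = Pi1 N p ε A := fun A => if_pos rfl
  have hPiY0 : ∀ A, PiY N p ε A false = Pi0 N p ε A := fun A => if_neg (by simp)
  have hsubY : ∀ (A : Finset (Fin N)) (k : Fin N) (y : Bool),
      (({σ (i0 k), σ (i1 k)} : Set ℝ) ⊆ PiY N p ε A y) ↔
        (col A (e (i0 k)) = y ∧ col A (e (i1 k)) = y) := by
    intro A k y
    rw [Set.insert_subset_iff, Set.singleton_subset_iff, ← he (i0 k), ← he (i1 k)]
    cases y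
    · rw [hPiY0, mem_Pi0, mem_Pi0]
    · rw [hPiY1, mem_Pi1, mem_Pi1]
  have hPR' : ∀ A, PR N p ε σ A ↔ ∀ k, col A (e (i0 k)) ≠ col A (e (i1 k)) := by
    intro A
    constructor
    · intro h k heq
      cases hb : col A (e (i1 k))
      · exact h k false ((hsubY A k false).mpr ⟨heq.trans hb, hb⟩)
      · exact h k true ((hsubY A k true).mpr ⟨heq.trans hb, hb⟩)
    · intro h k y hsub
      obtain ⟨h1, h2⟩ := (hsubY A k y).mp hsub
      exact h k (h1.trans h2.symm)
  have hPR : ∀ A, PR N p ε σ A ↔ ∀ v, col A (tE v) ≠ col A v := by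
    intro A
    rw [hPR']
    constructor
    · intro h v
      obtain ⟨k, ⟨hj1, hj2⟩ | ⟨hj1, hj2⟩⟩ := hj (e.symm v)
      · have hv : v = e (i0 k) := by rw [← hj1, Equiv.apply_symm_apply]
        have ht : tE v = e (i1 k) := by rw [htE, hj2]
        rw [ht, hv]
        exact (h k).symm
      · have hv : v = e (i1 k) := by rw [← hj1, Equiv.apply_symm_apply]
        have ht : tE v = e (i0 k) := by rw [htE, hj2]
        rw [ht, hv]
        exact h k
    · intro h k
      have h1 := h (e (i0 k))
      have h2 : tE (e (i0 k)) = e (i1 k) := by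
        rw [htE, Equiv.symm_apply_apply, sw_i0]
      rw [h2] at h1
      exact h1.symm
  -- adjacency characterization of Gsig
  have pairEq : ∀ u v : Fin N × Bool, u ≠ v →
      (∃ k : Fin N, ({pt N p ε u, pt N p ε v} : Set ℝ) = {σ (i0 k), σ (i1 k)}) →
      v = tE u := by
    rintro u v huv ⟨k, hset⟩
    have hu : pt N p ε u ∈ ({σ (i0 k), σ (i1 k)} : Set ℝ) := by
      rw [← hset]; exact Set.mem_insert _ _
    have hv : pt N p ε v ∈ ({σ (i0 k), σ (i1 k)} : Set ℝ) := by
      rw [← hset]; exact Set.mem_insert_of_mem _ rfl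
    rw [← he (i0 k), ← he (i1 k)] at hu hv
    simp only [Set.mem_insert_iff, Set.mem_singleton_iff] at hu hv
    rcases hu with hu | hu <;> rcases hv with hv | hv
    · exact absurd ((hinj hu).trans (hinj hv).symm) huv
    · obtain rfl := hinj hu
      obtain rfl := hinj hv
      rw [htE, Equiv.symm_apply_apply, sw_i0]
    · obtain rfl := hinj hu
      obtain rfl := hinj hv
      rw [htE, Equiv.symm_apply_apply, sw_i1]
    · exact absurd ((hinj hu).trans (hinj hv).symm) huv
  have hpair : ∀ u : Fin N × Bool, ∃ k : Fin N,
      ({pt N p ε u, pt N p ε (tE u)} : Set ℝ) = {σ (i0 k), σ (i1 k)} := by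
    intro u
    have hptu : pt N p ε u = σ (e.symm u) := by
      rw [← he (e.symm u), Equiv.apply_symm_apply]
    have hptt : pt N p ε (tE u) = σ (swF N (e.symm u)) := by
      rw [htE, he]
    obtain ⟨k, ⟨hj1, hj2⟩ | ⟨hj1, hj2⟩⟩ := hj (e.symm u)
    · exact ⟨k, by rw [hptu, hptt, hj2, hj1]⟩
    · exact ⟨k, by rw [hptu, hptt, hj2, hj1, Set.pair_comm]⟩
  have hadj : ∀ u v, (Gsig N p ε σ).Adj u v ↔ u ≠ v ∧ (v = (sE N) u ∨ v = tE u) := by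
    intro u v
    rw [Gsig, SimpleGraph.fromRel_adj]
    constructor
    · rintro ⟨hne, h | h⟩ <;> refine ⟨hne, ?_⟩
      · rcases h with h1 | h2
        · left
          obtain ⟨k, b⟩ := u; obtain ⟨k', b'⟩ := v
          obtain rfl : k = k' := h1
          have hb : b' = !b := by
            cases b <;> cases b' <;> first | rfl | exact absurd rfl hne
          rw [hb]; rfl
        · exact Or.inr (pairEq u v hne h2)
      · rcases h with h1 | h2
        · left
          obtain ⟨k, b⟩ := u; obtain ⟨k', b'⟩ := v
          obtain rfl : k = k' := h1.symm
          have hb : b' = !b := by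
            cases b <;> cases b' <;> first | rfl | exact absurd rfl hne
          rw [hb]; rfl
        · refine Or.inr (pairEq u v hne ?_)
          obtain ⟨k, hk⟩ := h2
          exact ⟨k, by rw [← hk, Set.pair_comm]⟩
    · rintro ⟨hne, rfl | rfl⟩
      · exact ⟨hne, Or.inl (Or.inl rfl)⟩
      · exact ⟨hne, Or.inl (Or.inr (hpair u))⟩
  -- the main equivalences
  obtain ⟨E⟩ := card_proper (Gsig N p ε σ) (sE N) tE hs2 ht2 hs1 ht1 hadj
  have hcols : ∀ (A : Finset (Fin N)) (v : Fin N × Bool), col A ((sE N) v) = !(col A v) := by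
    intro A ⟨k, b⟩
    simp only [col, sE, Equiv.coe_fn_mk]
    cases hd : decide (k ∈ A) <;> cases b <;> rfl
  have hProper : ∀ A, PR N p ε σ A →
      ∀ v, col A ((sE N) v) ≠ col A v ∧ col A (tE v) ≠ col A v := by
    intro A hA v
    refine ⟨?_, (hPR A).mp hA v⟩
    rw [hcols]
    cases col A v <;> simp
  have hcolrec : ∀ (χ : Fin N × Bool → Bool), (∀ v, χ ((sE N) v) ≠ χ v) →
      col (Finset.univ.filter (fun k => χ (k, true) = true)) = χ := by
    intro χ hχ
    funext v
    obtain ⟨k, b⟩ := v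
    have hmem : decide (k ∈ Finset.univ.filter (fun k => χ (k, true) = true)) = χ (k, true) := by
      cases hc : χ (k, true) <;> simp [Finset.mem_filter, hc]
    cases b
    · have h1 : χ ((sE N) (k, false)) ≠ χ (k, false) := hχ (k, false)
      have h2 : (sE N) (k, false) = (k, true) := rfl
      rw [h2] at h1
      show (decide (k ∈ _) == false) = χ (k, false)
      rw [hmem]
      revert h1
      cases χ (k, true) <;> cases χ (k, false) <;> simp
    · show (decide (k ∈ _) == true) = χ (k, true)
      rw [hmem]
      cases χ (k, true) <;> rfl
  let EA : {A : Finset (Fin N) // PR N p ε σ A} ≃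
      {χ : Fin N × Bool → Bool // ∀ v, χ ((sE N) v) ≠ χ v ∧ χ (tE v) ≠ χ v} :=
    { toFun := fun A => ⟨col A.1, hProper A.1 A.2⟩
      invFun := fun χ => ⟨Finset.univ.filter (fun k => χ.1 (k, true) = true),
        (hPR _).mpr (by
          rw [hcolrec χ.1 (fun v => (χ.2 v).1)]
          exact fun v => (χ.2 v).2)⟩
      left_inv := fun A => Subtype.ext (by
        ext k
        simp [col, Finset.mem_filter])
      right_inv := fun χ => Subtype.ext (hcolrec χ.1 fun v => (χ.2 v).1) }
  have hcard := Nat.card_congr (EA.trans E)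
  constructor
  · exact ⟨((EA.trans E).symm (fun _ => true)).1, ((EA.trans E).symm (fun _ => true)).2⟩
  · rw [hcard]
    have hfin : Finite (Gsig N p ε σ).ConnectedComponent := Quot.finite _
    cases nonempty_fintype (Gsig N p ε σ).ConnectedComponent
    rw [Nat.card_eq_fintype_card, Nat.card_eq_fintype_card, Fintype.card_fun,
      Fintype.card_bool]

end
end

section
/- With posterior terms as above, a bijection $\sigma:[2N]\to\Pi$ is induced by a subset $A\subseteq[N]$ (i.e., $\{\sigma(2k-1),\sigma(2k)\}=\{\pi_A^0(k),\pi_A^1(k)\}$ for all $k\in[N]$) if and only if $A$ and $\sigma$ are posterior-respecting and order-preserving. -/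
open scoped Classical

noncomputable section

lemma range_eq_of_inj' {n : ℕ} {f g : Fin n → ℝ} (hf : Function.Injective f)
    (hg : Function.Injective g) (h : Set.range f ⊆ Set.range g) :
    Set.range f = Set.range g := by
  classical
  have h1 : (Finset.univ.image f) ⊆ Finset.univ.image g := by
    intro x hx
    simp only [Finset.mem_image, Finset.mem_univ, true_and] at *
    obtain ⟨a, ha⟩ := hx
    exact h ⟨a, ha⟩
  have h2 : Finset.univ.image f = Finset.univ.image g :=
    Finset.eq_of_subset_of_card_le h1 (by
      rw [Finset.card_image_of_injective _ hg, Finset.card_image_of_injective _ hf])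
  ext x
  constructor <;> intro hx
  · exact h hx
  · obtain ⟨b, hb⟩ := hx
    have : x ∈ Finset.univ.image f := by rw [h2]; simp [Finset.mem_image]; exact ⟨b, hb⟩
    simp only [Finset.mem_image, Finset.mem_univ, true_and] at this
    exact this

/-- **(Statement 6.)** A bijection `σ : [2N] → Π` is induced by `A`
(`{σ(2k-1), σ(2k)} = {π_A^0(k), π_A^1(k)}` for all `k`) iff `A` and `σ` are
posterior-respecting and order-preserving. Here `π_A^y` is the strictly descending
enumeration of `Π_A^y`. -/
theorem stmt6 (N : ℕ) (hN : 1 ≤ N) (p : Fin N → ℝ) (hp : ∀ k, p k ∈ Set.Ioo (0:ℝ) 1)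
    (hsum : ∑ k, p k = 1) (ε : ℝ) (hε0 : 0 < ε) (hε : ε < 1 / 2)
    (hinj : Function.Injective (pt N p ε))
    (A : Finset (Fin N))
    (σ : Fin (2 * N) → ℝ) (hσinj : Function.Injective σ)
    (hσr : Set.range σ = PiAll N p ε)
    (πA : Bool → Fin N → ℝ) (hπanti : ∀ y, StrictAnti (πA y))
    (hπr : ∀ y, Set.range (πA y) = PiY N p ε A y) :
    (∀ k : Fin N, ({σ (i0 k), σ (i1 k)} : Set ℝ) = {πA false k, πA true k}) ↔
      (PR N p ε σ A ∧
        ∀ (i j : Fin (2 * N)) (y : Bool), i < j →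
          σ i ∈ PiY N p ε A y → σ j ∈ PiY N p ε A y → σ j < σ i) := by
  have hdisj : ∀ y y' : Bool, y ≠ y' → ∀ x : ℝ,
      x ∈ PiY N p ε A y → x ∉ PiY N p ε A y' := by
    intro y y' hyy x hx hx'
    cases y <;> cases y' <;> simp_all [PiY, Pi0, Set.mem_diff]
  have hmemY : ∀ (y : Bool) (k : Fin N), πA y k ∈ PiY N p ε A y := by
    intro y k; rw [← hπr y]; exact Set.mem_range_self k
  have hall : ∀ i, σ i ∈ PiAll N p ε := by
    intro i; rw [← hσr]; exact Set.mem_range_self i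
  have hsplit : ∀ i, σ i ∈ PiY N p ε A false ∨ σ i ∈ PiY N p ε A true := by
    intro i
    by_cases h : σ i ∈ Pi1 N p ε A
    · exact Or.inr (by simpa [PiY] using h)
    · exact Or.inl (by simp [PiY, Pi0, Set.mem_diff]; exact ⟨hall i, h⟩)
  constructor
  · intro hpairs
    constructor
    · intro k y hsub
      have h1 : πA (!y) k ∈ ({σ (i0 k), σ (i1 k)} : Set ℝ) := by
        rw [hpairs k]; cases y <;> simp
      exact hdisj y (!y) (by cases y <;> simp) _ (hsub h1) (hmemY (!y) k)
    · intro i j y hij hi hj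
      set ki : Fin N := ⟨i.1 / 2, by have := i.isLt; omega⟩ with hki
      set kj : Fin N := ⟨j.1 / 2, by have := j.isLt; omega⟩ with hkj
      have hival : i = i0 ki ∨ i = i1 ki := by
        rcases Nat.even_or_odd i.1 with h | h
        · obtain ⟨m, hm⟩ := h; left; apply Fin.ext; show i.1 = 2 * (i.1 / 2); omega
        · obtain ⟨m, hm⟩ := h; right; apply Fin.ext; show i.1 = 2 * (i.1 / 2) + 1; omega
      have hjval : j = i0 kj ∨ j = i1 kj := by
        rcases Nat.even_or_odd j.1 with h | h
        · obtain ⟨m, hm⟩ := h; left; apply Fin.ext; show j.1 = 2 * (j.1 / 2); omega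
        · obtain ⟨m, hm⟩ := h; right; apply Fin.ext; show j.1 = 2 * (j.1 / 2) + 1; omega
      have key : ∀ (m : Fin (2*N)) (km : Fin N), (m = i0 km ∨ m = i1 km) →
          σ m ∈ PiY N p ε A y → σ m = πA y km := by
        intro m km hm hmY
        have hmem : σ m ∈ ({πA false km, πA true km} : Set ℝ) := by
          rw [← hpairs km]; rcases hm with h | h <;> rw [h] <;> simp
        simp only [Set.mem_insert_iff, Set.mem_singleton_iff] at hmem
        rcases hmem with h | h
        · cases y
          · exact h
          · exfalso; rw [h] at hmY
            exact hdisj false true (by simp) _ (hmemY false km) hmY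
        · cases y
          · exfalso; rw [h] at hmY
            exact hdisj true false (by simp) _ (hmemY true km) hmY
          · exact h
      have hi' := key i ki hival hi
      have hj' := key j kj hjval hj
      have hkij : ki < kj := by
        rcases lt_or_ge ki kj with h | h
        · exact h
        · exfalso
          have hkk : ki = kj := by
            apply Fin.ext
            have h1 : i.1 < j.1 := hij
            have h2 : j.1 / 2 ≤ i.1 / 2 := h
            show i.1 / 2 = j.1 / 2
            omega
          rw [hkk] at hi'
          exact absurd (hσinj (hi'.trans hj'.symm)) (ne_of_lt hij)
      rw [hi', hj']
      exact hπanti y hkij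
  · rintro ⟨hPR, hOP⟩ k
    -- classification of each pair
    have hclass : ∀ k : Fin N, ∃ y : Bool,
        σ (i0 k) ∈ PiY N p ε A y ∧ σ (i1 k) ∈ PiY N p ε A (!y) := by
      intro k
      rcases hsplit (i0 k) with h0 | h0 <;> rcases hsplit (i1 k) with h1 | h1
      · exact absurd (by intro x hx; rcases hx with h|h <;> subst h <;> assumption) (hPR k false)
      · exact ⟨false, h0, h1⟩
      · exact ⟨true, h0, h1⟩
      · exact absurd (by intro x hx; rcases hx with h|h <;> subst h <;> assumption) (hPR k true)
    set g : Bool → Fin N → ℝ := fun y k =>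
      if σ (i0 k) ∈ PiY N p ε A y then σ (i0 k) else σ (i1 k) with hg
    have hgspec : ∀ (y : Bool) (k : Fin N),
        (g y k = σ (i0 k) ∨ g y k = σ (i1 k)) ∧ g y k ∈ PiY N p ε A y := by
      intro y k
      obtain ⟨y', h0, h1⟩ := hclass k
      have hgdef : g y k = if σ (i0 k) ∈ PiY N p ε A y then σ (i0 k) else σ (i1 k) := rfl
      by_cases hy : y = y'
      · subst hy
        rw [hgdef, if_pos h0]
        exact ⟨Or.inl rfl, h0⟩
      · have hy2 : y = !y' := by cases y <;> cases y' <;> simp_all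
        subst hy2
        have hnot : σ (i0 k) ∉ PiY N p ε A (!y') :=
          hdisj y' (!y') (by cases y' <;> simp) _ h0
        rw [hgdef, if_neg hnot]
        exact ⟨Or.inr rfl, h1⟩
    have hganti : ∀ y : Bool, StrictAnti (g y) := by
      intro y a b hab
      obtain ⟨ha1, ha2⟩ := hgspec y a
      obtain ⟨hb1, hb2⟩ := hgspec y b
      have : ∃ i, (i.1 ≤ 2 * a.1 + 1) ∧ g y a = σ i := by
        rcases ha1 with h | h
        · exact ⟨i0 a, by show 2 * a.1 ≤ 2 * a.1 + 1; omega, h⟩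
        · exact ⟨i1 a, le_refl _, h⟩
      obtain ⟨i, hile, hieq⟩ := this
      have : ∃ j, (2 * b.1 ≤ j.1) ∧ g y b = σ j := by
        rcases hb1 with h | h
        · exact ⟨i0 b, le_refl _, h⟩
        · exact ⟨i1 b, by show 2 * b.1 ≤ 2 * b.1 + 1; omega, h⟩
      obtain ⟨j, hjge, hjeq⟩ := this
      have hij : i < j := by
        have : a.1 < b.1 := hab
        show i.1 < j.1
        omega
      rw [hieq, hjeq]
      exact hOP i j y hij (hieq ▸ ha2) (hjeq ▸ hb2)
    have hgeq : ∀ y : Bool, g y = πA y := by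
      intro y
      have hr : Set.range (g y) = Set.range (πA y) := by
        apply range_eq_of_inj' (hganti y).injective (hπanti y).injective
        rintro x ⟨a, rfl⟩
        rw [hπr y]
        exact (hgspec y a).2
      exact Set.range_injOn_strictAnti (hganti y) (hπanti y) hr
    have hpair : ({σ (i0 k), σ (i1 k)} : Set ℝ) = {g false k, g true k} := by
      obtain ⟨h01, hm0⟩ := hgspec false k
      obtain ⟨h11, hm1⟩ := hgspec true k
      rcases h01 with h0 | h0 <;> rcases h11 with h1 | h1
      · exfalso
        have e0 : σ (i0 k) ∈ PiY N p ε A false := by rw [← h0]; exact hm0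
        have e1 : σ (i0 k) ∈ PiY N p ε A true := by rw [← h1]; exact hm1
        exact hdisj false true (by simp) _ e0 e1
      · rw [h0, h1]
      · rw [h0, h1, Set.pair_comm]
      · exfalso
        have e0 : σ (i1 k) ∈ PiY N p ε A false := by rw [← h0]; exact hm0
        have e1 : σ (i1 k) ∈ PiY N p ε A true := by rw [← h1]; exact hm1
        exact hdisj false true (by simp) _ e0 e1
    rw [hpair, hgeq false, hgeq true]
end
end

section
/- Let $\sigma^{\downarrow}:[2N]\to\Pi$ be the unique bijection with $\sigma^{\downarrow}(1)>\sigma^{\downarrow}(2)>\cdots>\sigma^{\downarrow}(2N)$, and let $A_{ZZ}=\{k\in[N]:k\text{ odd}\}$ be the zigzag partition. Then $A_{ZZ}$ and $\sigma^{\downarrow}$ are posterior-respecting: for every $k\in[N]$ and $y\in\{0,1\}$, $\{\sigma^{\downarrow}(2k-1),\sigma^{\downarrow}(2k)\}\not\subseteq\Pi_{A_{ZZ}}^y$. -/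
open scoped Classical

noncomputable section

lemma initseg {N : ℕ} (K : Finset (Fin N)) (hK : ∀ k k' : Fin N, k' ≤ k → k ∈ K → k' ∈ K) :
    ∀ k : Fin N, k ∈ K ↔ k.1 < K.card := by
  rcases K.eq_empty_or_nonempty with h | h
  · subst h; simp
  · have hM : K = Finset.Iic (K.max' h) := by
      ext w
      constructor
      · intro hw; exact Finset.mem_Iic.mpr (K.le_max' w hw)
      · intro hw; exact hK _ _ (Finset.mem_Iic.mp hw) (K.max'_mem h)
    intro k
    rw [hM, Finset.mem_Iic, Fin.card_Iic, Fin.le_def]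
    omega

lemma nat_zero (N b b' : ℕ) (hb : b ≤ N) (hb' : b' ≤ N)
    (h : ∀ w, w < N → (w < b' ↔ w < b)) : b' = b := by
  rcases Nat.lt_trichotomy b b' with hlt | heq | hgt
  · have := (h b (by omega)).mp (by omega); omega
  · omega
  · have := (h b' (by omega)).mpr (by omega); omega

lemma nat_one (N a a' x : ℕ) (hx : a ≤ x) (hxN : x < N)
    (h : ∀ w, w < N → (w < a' ↔ w < a ∨ w = x)) : x = a := by
  have h1 : x < a' := (h x hxN).mpr (Or.inr rfl)
  have h3 := h a (by omega)
  rcases h3.mp (by omega) with h' | h' <;> omega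

lemma nat_two (N a a' x y : ℕ) (hx : a ≤ x) (hy : a ≤ y) (hxy : x ≠ y)
    (hxN : x < N) (hyN : y < N) (ha' : a' ≤ N)
    (h : ∀ w, w < N → (w < a' ↔ w < a ∨ w = x ∨ w = y)) : x % 2 ≠ y % 2 := by
  have h1 : x < a' := (h x hxN).mpr (Or.inr (Or.inl rfl))
  have h2 : y < a' := (h y hyN).mpr (Or.inr (Or.inr rfl))
  have h3 : a' ≤ a + 2 := by
    by_contra hc
    have e0 := (h a (by omega)).mp (by omega)
    have e1 := (h (a+1) (by omega)).mp (by omega)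
    have e2 := (h (a+2) (by omega)).mp (by omega)
    omega
  omega

/-- **(Statement 7.)** The zigzag partition `A_ZZ` and the descending enumeration
`σ↓` of all posterior terms are posterior-respecting: for every `k` and `y`,
`{σ↓(2k-1), σ↓(2k)} ⊄ Π_{A_ZZ}^y`. -/
theorem stmt7 (N : ℕ) (hN : 1 ≤ N) (p : Fin N → ℝ) (hp : ∀ k, 0 < p k)
    (hsum : ∑ k, p k = 1) (hpanti : StrictAnti p)
    (ε : ℝ) (hε0 : 0 < ε) (hε : ε < 1 / 2)
    (hinj : Function.Injective (pt N p ε))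
    (σd : Fin (2 * N) → ℝ) (hσd : StrictAnti σd) (hσr : Set.range σd = PiAll N p ε) :
    PR N p ε σd (AZZ N) := by
  intro k y hsub
  -- the inverse enumeration e
  have hmemP : ∀ i : Fin (2*N), ∃ u, pt N p ε u = σd i := by
    intro i
    have : σd i ∈ PiAll N p ε := by rw [← hσr]; exact Set.mem_range_self i
    exact this
  choose e he using hmemP
  have heinj : Function.Injective e := by
    intro i j h
    exact hσd.injective (by rw [← he, ← he, h])
  have hesurj : ∀ u, ∃ i, e i = u := by
    intro u
    have : pt N p ε u ∈ Set.range σd := by rw [hσr]; exact ⟨u, rfl⟩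
    obtain ⟨i, hi⟩ := this
    exact ⟨i, hinj (by rw [he, hi])⟩
  have hord : ∀ i j : Fin (2*N), pt N p ε (e i) < pt N p ε (e j) → j < i := by
    intro i j h
    rw [he, he] at h
    exact hσd.lt_iff_gt.mp h
  have hptmono : ∀ (bb : Bool) (w w' : Fin N), w < w' →
      pt N p ε (w', bb) < pt N p ε (w, bb) := by
    intro bb w w' hlt
    have hpp := hpanti hlt
    cases bb <;> simp only [pt] <;> simp <;> nlinarith [hp w, hp w']
  -- prefix sets
  set T : ℕ → Finset (Fin N × Bool) :=
    fun m => (Finset.univ.filter (fun i : Fin (2*N) => i.1 < m)).image e with hT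
  have hTmem : ∀ (m : ℕ) (z), z ∈ T m ↔ ∃ i : Fin (2*N), i.1 < m ∧ e i = z := by
    intro m z
    simp [hT, Finset.mem_image, Finset.mem_filter]
  have hTcard : ∀ m, m ≤ 2*N → (T m).card = m := by
    intro m hm
    rw [hT]
    simp only
    rw [Finset.card_image_of_injective _ heinj]
    have : (Finset.univ.filter (fun i : Fin (2*N) => i.1 < m)).card = (Finset.range m).card := by
      apply Finset.card_bij (fun i _ => i.1)
      · intro a ha; simp at ha; simpa using ha
      · intro a _ b _ hab; exact Fin.val_injective hab
      · intro x hx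
        simp at hx
        exact ⟨⟨x, lt_of_lt_of_le hx hm⟩, by simpa using hx, rfl⟩
    rw [this, Finset.card_range]
  set cnt : ℕ → Bool → ℕ := fun m bb => ((T m).filter (fun z => z.2 = bb)).card with hcnt
  have hchar : ∀ (m : ℕ) (bb : Bool) (w : Fin N), ((w, bb) ∈ T m ↔ w.1 < cnt m bb) := by
    intro m bb
    set K : Finset (Fin N) := Finset.univ.filter (fun w : Fin N => (w, bb) ∈ T m) with hKdef
    have hdc : ∀ w w' : Fin N, w' ≤ w → w ∈ K → w' ∈ K := by
      intro w w' hle hw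
      rw [hKdef, Finset.mem_filter] at hw ⊢
      refine ⟨Finset.mem_univ _, ?_⟩
      rcases eq_or_lt_of_le hle with rfl | hlt
      · exact hw.2
      · obtain ⟨i, him, hei⟩ := (hTmem m _).mp hw.2
        obtain ⟨j, hj⟩ := hesurj (w', bb)
        have hlt2 : pt N p ε (e i) < pt N p ε (e j) := by
          rw [hei, hj]; exact hptmono bb w' w hlt
        have hji := hord i j hlt2
        exact (hTmem m _).mpr ⟨j, Nat.lt_trans (Fin.lt_def.mp hji) him, hj⟩
    have hKcard : K.card = cnt m bb := by
      rw [hcnt]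
      simp only
      apply Finset.card_bij (fun w _ => (w, bb))
      · intro a ha
        rw [hKdef, Finset.mem_filter] at ha
        rw [Finset.mem_filter]
        exact ⟨ha.2, rfl⟩
      · intro a _ b _ hab
        exact congrArg Prod.fst hab
      · rintro ⟨z1, z2⟩ hz
        rw [Finset.mem_filter] at hz
        obtain ⟨hz1, hz2⟩ := hz
        simp only at hz2
        subst hz2
        exact ⟨z1, by rw [hKdef, Finset.mem_filter]; exact ⟨Finset.mem_univ _, hz1⟩, rfl⟩
    intro w
    rw [← hKcard, ← initseg K hdc w, hKdef, Finset.mem_filter]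
    simp
  have hcntle : ∀ m bb, cnt m bb ≤ N := by
    intro m bb
    have h1 : ((T m).filter (fun z => z.2 = bb)).card ≤ (Finset.univ : Finset (Fin N)).card := by
      apply Finset.card_le_card_of_injOn (fun z => z.1) (fun z _ => Finset.mem_univ _)
      intro z hz z' hz' hfst
      rw [Finset.mem_coe, Finset.mem_filter] at hz hz'
      exact Prod.ext hfst (hz.2.trans hz'.2.symm)
    simpa [hcnt] using h1
  have hsum2 : ∀ m, m ≤ 2*N → cnt m true + cnt m false = m := by
    intro m hm
    have h1 := Finset.card_filter_add_card_filter_not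
      (s := T m) (p := fun (z : Fin N × Bool) => z.2 = true)
    have h2 : (T m).filter (fun z => ¬ z.2 = true) = (T m).filter (fun z => z.2 = false) := by
      apply Finset.filter_congr; intro z _; simp
    rw [h2, hTcard m hm] at h1
    rw [hcnt]
    exact h1
  -- the two new elements
  have hkN := k.isLt
  have hm2 : 2*k.1+2 ≤ 2*N := by omega
  have hunotin : e (i0 k) ∉ T (2*k.1) := by
    intro hmem
    obtain ⟨i, him, hei⟩ := (hTmem _ _).mp hmem
    have : i = i0 k := heinj hei
    subst this
    simp only [i0] at him
    omega
  have hvnotin : e (i1 k) ∉ T (2*k.1) := by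
    intro hmem
    obtain ⟨i, him, hei⟩ := (hTmem _ _).mp hmem
    have : i = i1 k := heinj hei
    subst this
    simp only [i1] at him
    omega
  have huv : e (i0 k) ≠ e (i1 k) := by
    intro h
    have : i0 k = i1 k := heinj h
    have := congrArg Fin.val this
    simp only [i0, i1] at this
    omega
  have hstep : ∀ z, z ∈ T (2*k.1+2) ↔ z ∈ T (2*k.1) ∨ z = e (i0 k) ∨ z = e (i1 k) := by
    intro z
    rw [hTmem, hTmem]
    constructor
    · rintro ⟨i, him, rfl⟩
      rcases Nat.lt_or_ge i.1 (2*k.1) with h | h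
      · exact Or.inl ⟨i, h, rfl⟩
      · have : i = i0 k ∨ i = i1 k := by
          rcases (by omega : i.1 = 2*k.1 ∨ i.1 = 2*k.1+1) with h' | h'
          · left; exact Fin.ext h'
          · right; exact Fin.ext h'
        rcases this with rfl | rfl
        · exact Or.inr (Or.inl rfl)
        · exact Or.inr (Or.inr rfl)
    · rintro (⟨i, him, rfl⟩ | rfl | rfl)
      · exact ⟨i, by omega, rfl⟩
      · exact ⟨i0 k, by show 2*k.1 < 2*k.1+2; omega, rfl⟩
      · exact ⟨i1 k, by show 2*k.1+1 < 2*k.1+2; omega, rfl⟩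
  -- class membership
  have hP1 : ∀ z : Fin N × Bool,
      pt N p ε z ∈ Pi1 N p ε (AZZ N) ↔ z.1.1 % 2 = (if z.2 then 0 else 1) := by
    intro z
    constructor
    · rintro ⟨k', (⟨hmem, heq⟩ | ⟨hmem, heq⟩)⟩
      · have hz := hinj heq
        rw [hz]
        simp [AZZ] at hmem ⊢
        omega
      · have hz := hinj heq
        rw [hz]
        simp [AZZ] at hmem ⊢
        omega
    · intro h
      refine ⟨z.1, ?_⟩
      cases hzb : z.2
      · right
        rw [hzb] at h
        simp at h
        refine ⟨by simp [AZZ]; omega, ?_⟩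
        congr 1
        exact (Prod.ext rfl hzb : z = (z.1, false))
      · left
        rw [hzb] at h
        simp at h
        refine ⟨by simp [AZZ]; exact h, ?_⟩
        congr 1
        exact (Prod.ext rfl hzb : z = (z.1, true))
  have hPY : ∀ z : Fin N × Bool, pt N p ε z ∈ PiY N p ε (AZZ N) y →
      z.1.1 % 2 = (if z.2 = y then 0 else 1) := by
    intro z hz
    cases y
    · replace hz : pt N p ε z ∈ Pi0 N p ε (AZZ N) := hz
      rw [Pi0, Set.mem_diff] at hz
      have h2 := hz.2
      rw [hP1 z] at h2
      cases hzb : z.2 <;> rw [hzb] at h2 <;> simp at h2 ⊢ <;> omega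
    · replace hz : pt N p ε z ∈ Pi1 N p ε (AZZ N) := hz
      rw [hP1 z] at hz
      cases hzb : z.2 <;> rw [hzb] at hz <;> simp at hz ⊢ <;> omega
  have hu := hPY (e (i0 k)) (by rw [he]; exact hsub (Set.mem_insert _ _))
  have hv := hPY (e (i1 k)) (by rw [he]; exact hsub (Set.mem_insert_of_mem _ rfl))
  -- counting setup
  have hab : cnt (2*k.1) true + cnt (2*k.1) false = 2*k.1 := hsum2 _ (by omega)
  have hab' : cnt (2*k.1+2) true + cnt (2*k.1+2) false = 2*k.1+2 := hsum2 _ hm2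
  have hnotlt : ∀ bb, (e (i0 k)).2 = bb → ¬ ((e (i0 k)).1.1 < cnt (2*k.1) bb) := by
    intro bb hbb hlt
    have heq : ((e (i0 k)).1, bb) = e (i0 k) :=
      (Prod.ext rfl hbb.symm : ((e (i0 k)).1, bb) = e (i0 k))
    exact hunotin (by rw [← heq]; exact (hchar _ bb _).mpr hlt)
  have hnotlt' : ∀ bb, (e (i1 k)).2 = bb → ¬ ((e (i1 k)).1.1 < cnt (2*k.1) bb) := by
    intro bb hbb hlt
    have heq : ((e (i1 k)).1, bb) = e (i1 k) :=
      (Prod.ext rfl hbb.symm : ((e (i1 k)).1, bb) = e (i1 k))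
    exact hvnotin (by rw [← heq]; exact (hchar _ bb _).mpr hlt)
  have hiff : ∀ (bb : Bool) (w : ℕ) (hw : w < N),
      (w < cnt (2*k.1+2) bb ↔
        w < cnt (2*k.1) bb ∨ (⟨w, hw⟩, bb) = e (i0 k) ∨ (⟨w, hw⟩, bb) = e (i1 k)) := by
    intro bb w hw
    have h := hstep (⟨w, hw⟩, bb)
    rw [hchar, hchar] at h
    exact h
  cases hub : (e (i0 k)).2 <;> cases hvb : (e (i1 k)).2
  · -- both false
    have hfalse : ∀ w, w < N → (w < cnt (2*k.1+2) false ↔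
        w < cnt (2*k.1) false ∨ w = (e (i0 k)).1.1 ∨ w = (e (i1 k)).1.1) := by
      intro w hw
      rw [hiff false w hw]
      simp [Prod.ext_iff, Fin.ext_iff, hub, hvb]
    have hne : (e (i0 k)).1.1 ≠ (e (i1 k)).1.1 := by
      intro h
      exact huv (Prod.ext (Fin.ext h) (hub.trans hvb.symm))
    have := nat_two N (cnt (2*k.1) false) (cnt (2*k.1+2) false) _ _
      (Nat.le_of_not_lt (hnotlt false hub)) (Nat.le_of_not_lt (hnotlt' false hvb)) hne
      (e (i0 k)).1.isLt (e (i1 k)).1.isLt (hcntle _ false) hfalse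
    rw [hub] at hu
    rw [hvb] at hv
    exact this (hu.trans hv.symm)
  · -- u false, v true
    have hfalse : ∀ w, w < N → (w < cnt (2*k.1+2) false ↔
        w < cnt (2*k.1) false ∨ w = (e (i0 k)).1.1) := by
      intro w hw
      rw [hiff false w hw]
      simp [Prod.ext_iff, Fin.ext_iff, hub, hvb]
    have htrue : ∀ w, w < N → (w < cnt (2*k.1+2) true ↔
        w < cnt (2*k.1) true ∨ w = (e (i1 k)).1.1) := by
      intro w hw
      rw [hiff true w hw]
      simp [Prod.ext_iff, Fin.ext_iff, hub, hvb]
    have h1 := nat_one N (cnt (2*k.1) false) (cnt (2*k.1+2) false) _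
      (Nat.le_of_not_lt (hnotlt false hub)) (e (i0 k)).1.isLt hfalse
    have h2 := nat_one N (cnt (2*k.1) true) (cnt (2*k.1+2) true) _
      (Nat.le_of_not_lt (hnotlt' true hvb)) (e (i1 k)).1.isLt htrue
    rw [hub, h1] at hu
    rw [hvb, h2] at hv
    cases y <;> simp at hu hv <;> omega
  · -- u true, v false
    have htrue : ∀ w, w < N → (w < cnt (2*k.1+2) true ↔
        w < cnt (2*k.1) true ∨ w = (e (i0 k)).1.1) := by
      intro w hw
      rw [hiff true w hw]
      simp [Prod.ext_iff, Fin.ext_iff, hub, hvb]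
    have hfalse : ∀ w, w < N → (w < cnt (2*k.1+2) false ↔
        w < cnt (2*k.1) false ∨ w = (e (i1 k)).1.1) := by
      intro w hw
      rw [hiff false w hw]
      simp [Prod.ext_iff, Fin.ext_iff, hub, hvb]
    have h1 := nat_one N (cnt (2*k.1) true) (cnt (2*k.1+2) true) _
      (Nat.le_of_not_lt (hnotlt true hub)) (e (i0 k)).1.isLt htrue
    have h2 := nat_one N (cnt (2*k.1) false) (cnt (2*k.1+2) false) _
      (Nat.le_of_not_lt (hnotlt' false hvb)) (e (i1 k)).1.isLt hfalse
    rw [hub, h1] at hu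
    rw [hvb, h2] at hv
    cases y <;> simp at hu hv <;> omega
  · -- both true
    have htrue : ∀ w, w < N → (w < cnt (2*k.1+2) true ↔
        w < cnt (2*k.1) true ∨ w = (e (i0 k)).1.1 ∨ w = (e (i1 k)).1.1) := by
      intro w hw
      rw [hiff true w hw]
      simp [Prod.ext_iff, Fin.ext_iff, hub, hvb]
    have hne : (e (i0 k)).1.1 ≠ (e (i1 k)).1.1 := by
      intro h
      exact huv (Prod.ext (Fin.ext h) (hub.trans hvb.symm))
    have := nat_two N (cnt (2*k.1) true) (cnt (2*k.1+2) true) _ _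
      (Nat.le_of_not_lt (hnotlt true hub)) (Nat.le_of_not_lt (hnotlt' true hvb)) hne
      (e (i0 k)).1.isLt (e (i1 k)).1.isLt (hcntle _ true) htrue
    rw [hub] at hu
    rw [hvb] at hv
    exact this (hu.trans hv.symm)

end
end

section
/- Suppose the $\sigma^{\downarrow}$-siblings $\{\sigma^{\downarrow}(2k-1),\sigma^{\downarrow}(2k)\}$ have the form $\{\epsilon p(i),\bar\epsilon p(j)\}$ for some $i,j\in[N]$. Then $i\le j$ and $i+j$ is even (i.e., $i$ and $j$ have the same parity). -/
open scoped Classical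

noncomputable section

lemma card_filter_prod_bool {N : ℕ} (Q : Fin N × Bool → Prop) [DecidablePred Q] :
    (Finset.univ.filter Q).card =
      (Finset.univ.filter fun m => Q (m, false)).card +
      (Finset.univ.filter fun m => Q (m, true)).card := by
  classical
  rw [Finset.card_filter, Finset.card_filter, Finset.card_filter, Fintype.sum_prod_type,
    ← Finset.sum_add_distrib]
  refine Finset.sum_congr rfl fun m _ => ?_
  rw [Fintype.sum_bool, add_comm]

lemma card_filter_fin_lt {N : ℕ} (i : Fin N) :
    (Finset.univ.filter fun m : Fin N => m < i).card = i.1 := by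
  have h : (Finset.univ.filter fun m : Fin N => m < i) = Finset.Iio i := by
    ext m; simp
  rw [h, Fin.card_Iio]

lemma card_filter_fin_le {N : ℕ} (i : Fin N) :
    (Finset.univ.filter fun m : Fin N => m ≤ i).card = i.1 + 1 := by
  have h : (Finset.univ.filter fun m : Fin N => m ≤ i) = Finset.Iic i := by
    ext m; simp
  rw [h, Fin.card_Iic]

lemma no_between {N : ℕ} (σd : Fin (2 * N) → ℝ) (hσd : StrictAnti σd) (k : Fin N)
    (x : ℝ) (hx : x ∈ Set.range σd) (h1 : σd (i1 k) < x) (h2 : x < σd (i0 k)) : False := by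
  obtain ⟨t, rfl⟩ := hx
  have h1' : t < i1 k := hσd.lt_iff_gt.mp h1
  have h2' : i0 k < t := hσd.lt_iff_gt.mp h2
  simp [i0, i1, Fin.lt_def] at h1' h2'
  omega

lemma count_gt {N : ℕ} (p : Fin N → ℝ) (ε : ℝ)
    (hinj : Function.Injective (pt N p ε))
    (σd : Fin (2 * N) → ℝ) (hσd : StrictAnti σd) (hσr : Set.range σd = PiAll N p ε)
    (s : Fin (2 * N)) :
    (Finset.univ.filter fun u : Fin N × Bool => σd s < pt N p ε u).card = s.1 := by
  classical
  have hmem : ∀ t, σd t ∈ Set.range (pt N p ε) := by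
    intro t
    have : σd t ∈ Set.range σd := Set.mem_range_self t
    rwa [hσr] at this
  set e : Fin (2 * N) → Fin N × Bool := fun t => (hmem t).choose with he
  have hpt : ∀ t, pt N p ε (e t) = σd t := fun t => (hmem t).choose_spec
  have heinj : Function.Injective e := by
    intro a b hab
    have h := hpt a
    rw [hab, hpt b] at h
    exact hσd.injective h.symm
  have hbij : Function.Bijective e := by
    refine (Fintype.bijective_iff_injective_and_card e).mpr ⟨heinj, by simp [mul_comm]⟩
  have hequiv : {t : Fin (2 * N) // σd s < σd t} ≃ {u : Fin N × Bool // σd s < pt N p ε u} :=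
    Equiv.subtypeEquiv (Equiv.ofBijective e hbij) (fun t => by simp [hpt t])
  have hcard := Fintype.card_congr hequiv
  rw [Fintype.card_subtype, Fintype.card_subtype] at hcard
  rw [← hcard]
  have h2 : (Finset.univ.filter fun t : Fin (2 * N) => σd s < σd t) =
      (Finset.univ.filter fun t : Fin (2 * N) => t < s) := by
    ext t; simp [hσd.lt_iff_gt]
  rw [h2, card_filter_fin_lt]

lemma pt_false {N : ℕ} (p : Fin N → ℝ) (ε : ℝ) (m : Fin N) :
    pt N p ε (m, false) = ε * p m := by simp [pt]

lemma pt_true {N : ℕ} (p : Fin N → ℝ) (ε : ℝ) (m : Fin N) :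
    pt N p ε (m, true) = (1 - ε) * p m := by simp [pt]


/-- **(Statement 8.)** If a σ↓-sibling pair has the form `{ε p(i), (1-ε) p(j)}`,
then `i ≤ j` and `i + j` is even (`i` and `j` have the same parity). -/
theorem stmt8 (N : ℕ) (hN : 1 ≤ N) (p : Fin N → ℝ) (hp : ∀ k, 0 < p k)
    (hsum : ∑ k, p k = 1) (hpanti : StrictAnti p)
    (ε : ℝ) (hε0 : 0 < ε) (hε : ε < 1 / 2)
    (hinj : Function.Injective (pt N p ε))
    (σd : Fin (2 * N) → ℝ) (hσd : StrictAnti σd) (hσr : Set.range σd = PiAll N p ε)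
    (k i j : Fin N)
    (hpair : ({σd (i0 k), σd (i1 k)} : Set ℝ) =
      {pt N p ε (i, false), pt N p ε (j, true)}) :
    i ≤ j ∧ Even (i.1 + j.1) := by
  classical
  have hε1 : ε < 1 - ε := by linarith
  have hlt01 : σd (i1 k) < σd (i0 k) := hσd (by simp [i0, i1, Fin.lt_def])
  have hma : σd (i0 k) = pt N p ε (i, false) ∨ σd (i0 k) = pt N p ε (j, true) := by
    have h : σd (i0 k) ∈ ({pt N p ε (i, false), pt N p ε (j, true)} : Set ℝ) := by
      rw [← hpair]; exact Set.mem_insert _ _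
    simpa using h
  have hmb : σd (i1 k) = pt N p ε (i, false) ∨ σd (i1 k) = pt N p ε (j, true) := by
    have h : σd (i1 k) ∈ ({pt N p ε (i, false), pt N p ε (j, true)} : Set ℝ) := by
      rw [← hpair]; exact Set.mem_insert_of_mem _ rfl
    simpa using h
  have hcount := count_gt p ε hinj σd hσd hσr (i1 k)
  rw [card_filter_prod_bool] at hcount
  have hi1v : (i1 k).1 = 2 * k.1 + 1 := rfl
  have hranpt : Set.range σd = Set.range (pt N p ε) := hσr
  rcases hma with h0 | h0 <;> rcases hmb with h1 | h1
  · exact absurd (h0.trans h1.symm) hlt01.ne'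
  · -- Case B: σd(i0 k) = ε p i, σd(i1 k) = (1-ε) p j
    have hba : (1 - ε) * p j < ε * p i := by
      rw [pt_false] at h0; rw [pt_true] at h1; rw [← h0, ← h1]; exact hlt01
    have hij : i < j := by
      have h2 : ε * p j < (1 - ε) * p j := by
        have := hp j; nlinarith
      have h3 : p j < p i := by
        have h4 : ε * p j < ε * p i := lt_trans h2 hba
        exact lt_of_mul_lt_mul_left h4 hε0.le
      exact hpanti.lt_iff_gt.mp h3
    -- true part: count = j
    have htrue : (Finset.univ.filter fun m : Fin N => σd (i1 k) < pt N p ε (m, true)) =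
        (Finset.univ.filter fun m : Fin N => m < j) := by
      ext m
      simp only [Finset.mem_filter, Finset.mem_univ, true_and, pt_true, h1, pt_true]
      constructor
      · intro hm
        have : p j < p m := lt_of_mul_lt_mul_left hm (by linarith)
        exact hpanti.lt_iff_gt.mp this
      · intro hm
        have : p j < p m := hpanti hm
        nlinarith
    -- false part: count = i + 1
    have hfalse : (Finset.univ.filter fun m : Fin N => σd (i1 k) < pt N p ε (m, false)) =
        (Finset.univ.filter fun m : Fin N => m ≤ i) := by
      ext m
      simp only [Finset.mem_filter, Finset.mem_univ, true_and, pt_false]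
      constructor
      · intro hm
        by_contra hmi
        push_neg at hmi
        have hlt : ε * p m < σd (i0 k) := by
          rw [h0, pt_false]
          have : p m < p i := hpanti hmi
          nlinarith
        exact no_between σd hσd k (ε * p m)
          (by rw [hranpt]; exact ⟨(m, false), pt_false p ε m⟩) hm hlt
      · intro hm
        have h2 : ε * p i ≤ ε * p m := by
          have := hpanti.antitone hm; nlinarith
        rw [h1, pt_true]
        linarith
    rw [htrue, hfalse, card_filter_fin_lt, card_filter_fin_le, hi1v] at hcount
    refine ⟨hij.le, ⟨k.1, by omega⟩⟩
  · -- Case A: σd(i0 k) = (1-ε) p j, σd(i1 k) = ε p i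
    rw [pt_true] at h0; rw [pt_false] at h1
    have hij : i ≤ j := by
      by_contra hji
      push_neg at hji
      refine no_between σd hσd k (ε * p j)
        (by rw [hranpt]; exact ⟨(j, false), pt_false p ε j⟩) ?_ ?_
      · rw [h1]
        have : p i < p j := hpanti hji
        nlinarith
      · rw [h0]
        have := hp j; nlinarith
    have hfalse : (Finset.univ.filter fun m : Fin N => σd (i1 k) < pt N p ε (m, false)) =
        (Finset.univ.filter fun m : Fin N => m < i) := by
      ext m
      simp only [Finset.mem_filter, Finset.mem_univ, true_and, pt_false, h1]
      constructor
      · intro hm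
        have : p i < p m := lt_of_mul_lt_mul_left hm hε0.le
        exact hpanti.lt_iff_gt.mp this
      · intro hm
        have : p i < p m := hpanti hm
        nlinarith
    have htrue : (Finset.univ.filter fun m : Fin N => σd (i1 k) < pt N p ε (m, true)) =
        (Finset.univ.filter fun m : Fin N => m ≤ j) := by
      ext m
      simp only [Finset.mem_filter, Finset.mem_univ, true_and, pt_true]
      constructor
      · intro hm
        by_contra hmj
        push_neg at hmj
        have hlt : (1 - ε) * p m < σd (i0 k) := by
          rw [h0]
          have : p m < p j := hpanti hmj
          nlinarith
        exact no_between σd hσd k ((1 - ε) * p m)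
          (by rw [hranpt]; exact ⟨(m, true), pt_true p ε m⟩) hm hlt
      · intro hm
        have h2 : (1 - ε) * p j ≤ (1 - ε) * p m := by
          have := hpanti.antitone hm; nlinarith
        rw [h1]
        have hlt' : ε * p i < (1 - ε) * p j := by rw [← h0, ← h1]; exact hlt01
        linarith
    rw [htrue, hfalse, card_filter_fin_lt, card_filter_fin_le, hi1v] at hcount
    refine ⟨hij, ⟨k.1, by omega⟩⟩
  · exact absurd (h0.trans h1.symm) hlt01.ne'


end
end

section
/- Suppose the $\sigma^{\downarrow}$-siblings $\{\sigma^{\downarrow}(2k-1),\sigma^{\downarrow}(2k)\}$ have the form $\{\epsilon p(i),\epsilon p(j)\}$ with $i\neq j$. Then $|i-j|=1$, so $i$ and $j$ have different parities. The same holds for siblings of the form $\{\bar\epsilon p(i),\bar\epsilon p(j)\}$. -/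
open scoped Classical

noncomputable section

private lemma stmt9_aux (N : ℕ) (p : Fin N → ℝ) (hpanti : StrictAnti p)
    (ε : ℝ) (σd : Fin (2 * N) → ℝ) (hσd : StrictAnti σd)
    (hσr : Set.range σd = PiAll N p ε)
    (c : ℝ) (hc : 0 < c) (b : Bool) (hcb : ∀ m : Fin N, pt N p ε (m, b) = c * p m)
    (k i j : Fin N) (hij : i < j)
    (h : ({σd (i0 k), σd (i1 k)} : Set ℝ) = {c * p i, c * p j}) :
    j.1 = i.1 + 1 := by
  have hord : σd (i1 k) < σd (i0 k) := by
    apply hσd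
    simp only [i0, i1, Fin.mk_lt_mk]
    omega
  have hpc : c * p j < c * p i := by
    have := hpanti hij
    nlinarith
  -- identify σd (i0 k) = c * p i and σd (i1 k) = c * p j
  have h0 : σd (i0 k) = c * p i := by
    have hm : σd (i0 k) ∈ ({c * p i, c * p j} : Set ℝ) := by
      rw [← h]; exact Set.mem_insert _ _
    rcases hm with hm | hm
    · exact hm
    · exfalso
      have hm2 : σd (i1 k) ∈ ({c * p i, c * p j} : Set ℝ) := by
        rw [← h]; exact Set.mem_insert_of_mem _ rfl
      rcases hm2 with hm2 | hm2 <;> simp only [Set.mem_singleton_iff] at hm hm2 <;>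
        nlinarith
  have h1 : σd (i1 k) = c * p j := by
    have hm : σd (i1 k) ∈ ({c * p i, c * p j} : Set ℝ) := by
      rw [← h]; exact Set.mem_insert_of_mem _ rfl
    rcases hm with hm | hm
    · exfalso; nlinarith
    · exact hm
  by_contra hne
  have hlt : i.1 + 1 < j.1 := by
    have := hij
    simp only [Fin.lt_def] at this
    omega
  have hmN : i.1 + 1 < N := lt_trans hlt j.isLt
  set m : Fin N := ⟨i.1 + 1, hmN⟩ with hm
  have hmem : c * p m ∈ Set.range σd := by
    rw [hσr]
    exact ⟨(m, b), hcb m⟩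
  obtain ⟨n, hn⟩ := hmem
  have him : i < m := by simp [hm, Fin.lt_def]
  have hmj : m < j := by simp [hm, Fin.lt_def]; omega
  have hlow : σd (i1 k) < σd n := by
    rw [h1, hn]
    have := hpanti hmj; nlinarith
  have hhigh : σd n < σd (i0 k) := by
    rw [h0, hn]
    have := hpanti him; nlinarith
  have h2 : i0 k < n := hσd.lt_iff_gt.mp hhigh
  have h3 : n < i1 k := hσd.lt_iff_gt.mp hlow
  simp only [i0, i1, Fin.lt_def] at h2 h3
  omega

/-- **(Statement 9.)** If a σ↓-sibling pair has the form `{ε p(i), ε p(j)}` with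
`i ≠ j`, then `|i - j| = 1`, so `i` and `j` have different parities; the same holds
for pairs of the form `{(1-ε) p(i), (1-ε) p(j)}`. -/
theorem stmt9 (N : ℕ) (hN : 1 ≤ N) (p : Fin N → ℝ) (hp : ∀ k, 0 < p k)
    (hsum : ∑ k, p k = 1) (hpanti : StrictAnti p)
    (ε : ℝ) (hε0 : 0 < ε) (hε : ε < 1 / 2)
    (hinj : Function.Injective (pt N p ε))
    (σd : Fin (2 * N) → ℝ) (hσd : StrictAnti σd) (hσr : Set.range σd = PiAll N p ε) :
    (∀ k i j : Fin N,
      ({σd (i0 k), σd (i1 k)} : Set ℝ) = {pt N p ε (i, false), pt N p ε (j, false)} →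
      i ≠ j → (i.1 + 1 = j.1 ∨ j.1 + 1 = i.1) ∧ i.1 % 2 ≠ j.1 % 2) ∧
    (∀ k i j : Fin N,
      ({σd (i0 k), σd (i1 k)} : Set ℝ) = {pt N p ε (i, true), pt N p ε (j, true)} →
      i ≠ j → (i.1 + 1 = j.1 ∨ j.1 + 1 = i.1) ∧ i.1 % 2 ≠ j.1 % 2) := by

  have hε1 : ε < 1 := by linarith
  have key : ∀ (c : ℝ), 0 < c → ∀ (b : Bool), (∀ m : Fin N, pt N p ε (m, b) = c * p m) →
      ∀ k i j : Fin N,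
      ({σd (i0 k), σd (i1 k)} : Set ℝ) = {c * p i, c * p j} →
      i ≠ j → (i.1 + 1 = j.1 ∨ j.1 + 1 = i.1) ∧ i.1 % 2 ≠ j.1 % 2 := by
    intro c hc b hcb k i j h hne
    rcases lt_trichotomy i j with hij | hij | hij
    · have := stmt9_aux N p hpanti ε σd hσd hσr c hc b hcb k i j hij h
      omega
    · exact absurd hij hne
    · have h' : ({σd (i0 k), σd (i1 k)} : Set ℝ) = {c * p j, c * p i} := by
        rw [h, Set.pair_comm]
      have := stmt9_aux N p hpanti ε σd hσd hσr c hc b hcb k j i hij h'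
      omega
  constructor
  · intro k i j h hne
    exact key ε hε0 false (fun m => by simp [pt]) k i j (by simpa [pt] using h) hne
  · intro k i j h hne
    exact key (1 - ε) (by linarith) true (fun m => by simp [pt]) k i j
      (by simpa [pt] using h) hne


end
end

section
/- For any probability mass function $p$ on $[N]$ with $p(1)\ge\cdots\ge p(N)$, lying probability $0\le\epsilon\le 1/2$, and nondecreasing $f:[N]\to\mathbb{R}$, the zigzag partition minimizes the expected value of $f$ of the guessing time: $G^f_{A_{ZZ}}(X)=\min_{A\subseteq[N]}G^f_A(X)$. -/
open scoped Classical

noncomputable section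

/-- The list of elements of a real multiset sorted in descending order. -/
def sortDesc (m : Multiset ℝ) : List ℝ := (m.sort (· ≤ ·)).reverse

/-- The multiset of posterior terms corresponding to Carole's answer `y` for the
partition `A`: for `y = 1` it consists of `(1-ε)p(k)` for `k ∈ A` and `ε p(k)` for
`k ∉ A`, and complementarily for `y = 0`. -/
def postMul (N : ℕ) (p : Fin N → ℝ) (ε : ℝ) (A : Finset (Fin N)) (y : Bool) :
    Multiset ℝ :=
  Finset.univ.val.map (fun k : Fin N => (if ((k ∈ A) ↔ y = true) then 1 - ε else ε) * p k)

/-- `G^f_A(X) = ∑_k f(k)·(π_A^0(k) + π_A^1(k))`, where `π_A^y` lists the posterior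
multiset `Π_A^y` in descending order. -/
def Gf (N : ℕ) (p : Fin N → ℝ) (ε : ℝ) (f : Fin N → ℝ) (A : Finset (Fin N)) : ℝ :=
  ∑ k : Fin N, f k * ((sortDesc (postMul N p ε A false)).getD k.1 0 +
    (sortDesc (postMul N p ε A true)).getD k.1 0)

lemma sortDesc_coe (m : Multiset ℝ) : ((sortDesc m : List ℝ) : Multiset ℝ) = m := by
  unfold sortDesc
  rw [Multiset.coe_reverse, Multiset.sort_eq]

lemma sortDesc_sorted (m : Multiset ℝ) : (sortDesc m).Pairwise (· ≥ ·) := by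
  unfold sortDesc
  rw [List.pairwise_reverse]
  have := Multiset.pairwise_sort (s := m) (r := (· ≤ ·))
  exact this.imp (fun h => h)

lemma length_sortDesc (m : Multiset ℝ) : (sortDesc m).length = Multiset.card m := by
  unfold sortDesc
  rw [List.length_reverse, Multiset.length_sort]

lemma sortDesc_unique {m : Multiset ℝ} {l : List ℝ} (h : (l : Multiset ℝ) = m)
    (hs : l.Pairwise (· ≥ ·)) : sortDesc m = l := by
  haveI : Std.Antisymm (α := ℝ) (· ≥ ·) := ⟨fun a b h1 h2 => le_antisymm h2 h1⟩
  refine List.Perm.eq_of_pairwise' (sortDesc_sorted m) hs ?_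
  exact Multiset.coe_eq_coe.mp (by rw [sortDesc_coe, h])


/-- Sum over the top `n` entries. -/
def topSum (m : Multiset ℝ) (n : ℕ) : ℝ := ((sortDesc m).take n).sum

lemma sum_le_take_of_le {l : List ℝ} (hl : l.Pairwise (· ≥ ·)) :
    ∀ s : Multiset ℝ, s ≤ (l : Multiset ℝ) → s.sum ≤ (l.take (Multiset.card s)).sum := by
  induction l with
  | nil =>
    intro s hs
    have : s = 0 := Multiset.le_zero.mp (by simpa using hs)
    simp [this]
  | cons M0 l' ih =>
    intro s hs
    rcases eq_or_ne s 0 with rfl | hne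
    · simp
    have hcpos : 0 < Multiset.card s := Multiset.card_pos.mpr hne
    obtain ⟨n, hn⟩ : ∃ n, Multiset.card s = n + 1 := ⟨Multiset.card s - 1, by omega⟩
    rw [List.pairwise_cons] at hl
    have hcons : ((M0 :: l' : List ℝ) : Multiset ℝ) = M0 ::ₘ (l' : Multiset ℝ) := rfl
    rw [hcons] at hs
    by_cases hM : M0 ∈ s
    · have h1 : s.erase M0 ≤ (l' : Multiset ℝ) := by
        have := Multiset.erase_le_erase M0 hs
        rwa [Multiset.erase_cons_head] at this
      have hsum : s.sum = M0 + (s.erase M0).sum := by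
        conv_lhs => rw [← Multiset.cons_erase hM]
        rw [Multiset.sum_cons]
      have hcard : Multiset.card (s.erase M0) = n := by
        rw [Multiset.card_erase_of_mem hM, hn]; rfl
      have := ih hl.2 _ h1
      rw [hcard] at this
      rw [hn, List.take_succ_cons, List.sum_cons, hsum]
      linarith
    · have hsl' : s ≤ (l' : Multiset ℝ) := by
        rw [Multiset.le_iff_count] at hs ⊢
        intro x
        have := hs x
        by_cases hx : x = M0
        · subst hx; simp [Multiset.count_eq_zero_of_notMem hM]
        · simpa [Multiset.count_cons, List.count_cons, hx, Ne.symm hx] using this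
      obtain ⟨a, ha⟩ := Multiset.exists_mem_of_ne_zero hne
      have haM : a ≤ M0 := hl.1 a (by
        have : a ∈ (l' : Multiset ℝ) := Multiset.mem_of_le hsl' ha
        simpa using this)
      have h1 : s.erase a ≤ (l' : Multiset ℝ) := le_trans (Multiset.erase_le a s) hsl'
      have hsum : s.sum = a + (s.erase a).sum := by
        conv_lhs => rw [← Multiset.cons_erase ha]
        rw [Multiset.sum_cons]
      have hcard : Multiset.card (s.erase a) = n := by
        rw [Multiset.card_erase_of_mem ha, hn]; rfl
      have := ih hl.2 _ h1
      rw [hcard] at this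
      rw [hn, List.take_succ_cons, List.sum_cons, hsum]
      linarith

/-- Any sub-multiset's sum is at most the sum of the same number of top entries. -/
lemma sum_le_topSum {s m : Multiset ℝ} (h : s ≤ m) : s.sum ≤ topSum m (Multiset.card s) := by
  have := sum_le_take_of_le (sortDesc_sorted m) s (by rwa [sortDesc_coe])
  exact this

lemma take_coe_le (m : Multiset ℝ) (n : ℕ) :
    (((sortDesc m).take n : List ℝ) : Multiset ℝ) ≤ m := by
  have : (((sortDesc m).take n : List ℝ) : Multiset ℝ) ≤ ↑(sortDesc m) :=
    ((sortDesc m).take_sublist n).subperm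
  rwa [sortDesc_coe] at this

lemma topSum_card (m : Multiset ℝ) : topSum m (Multiset.card m) = m.sum := by
  unfold topSum
  rw [← length_sortDesc, List.take_length, ← Multiset.sum_coe, sortDesc_coe]

lemma exists_split {s a b : Multiset ℝ} (h : s ≤ a + b) :
    ∃ u v, u ≤ a ∧ v ≤ b ∧ s = u + v := by
  refine ⟨s ∩ a, s - s ∩ a, Multiset.inter_le_right, ?_, ?_⟩
  · rw [Multiset.le_iff_count]
    intro x
    have h1 := Multiset.count_le_of_le x h
    rw [Multiset.count_add] at h1
    rw [Multiset.count_sub, Multiset.count_inter]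
    omega
  · rw [add_comm]
    exact (tsub_add_cancel_of_le (Multiset.inter_le_left)).symm


lemma topSum_add_le {m0 m1 : Multiset ℝ} {j : ℕ} (h0 : j ≤ Multiset.card m0)
    (h1 : j ≤ Multiset.card m1) :
    topSum m0 j + topSum m1 j ≤ topSum (m0 + m1) (2 * j) := by
  set w : Multiset ℝ := (((sortDesc m0).take j : List ℝ) : Multiset ℝ)
    + (((sortDesc m1).take j : List ℝ) : Multiset ℝ) with hw
  have hwle : w ≤ m0 + m1 := add_le_add (take_coe_le m0 j) (take_coe_le m1 j)
  have hcard : Multiset.card w = 2 * j := by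
    rw [hw, Multiset.card_add, Multiset.coe_card, Multiset.coe_card,
      List.length_take, List.length_take, length_sortDesc, length_sortDesc]
    omega
  have := sum_le_topSum hwle
  rw [hcard] at this
  simpa [hw, Multiset.sum_coe, topSum] using this

lemma card_filter_even (s : ℕ) :
    ((Finset.range s).filter (fun i => i % 2 = 0)).card = (s + 1) / 2 := by
  induction s with
  | zero => simp
  | succ n ih =>
    rw [Finset.range_add_one, Finset.filter_insert]
    by_cases h : n % 2 = 0
    · rw [if_pos h, Finset.card_insert_of_notMem (by simp), ih]
      omega
    · rw [if_neg h, ih]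
      omega

lemma card_filter_odd (s : ℕ) :
    ((Finset.range s).filter (fun i => i % 2 = 1)).card = s / 2 := by
  induction s with
  | zero => simp
  | succ n ih =>
    rw [Finset.range_add_one, Finset.filter_insert]
    by_cases h : n % 2 = 1
    · rw [if_pos h, Finset.card_insert_of_notMem (by simp), ih]
      omega
    · rw [if_neg h, ih]
      omega

lemma card_fin_filter {N : ℕ} (Q : ℕ → Prop) (i1 : DecidablePred Q)
    (i2 : DecidablePred (fun k : Fin N => Q k.1)) :
    (@Finset.filter _ (fun k : Fin N => Q k.1) i2 Finset.univ).card
      = (@Finset.filter _ Q i1 (Finset.range N)).card := by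
  rw [Finset.card_filter, Finset.card_filter]
  rw [← Fin.sum_univ_eq_sum_range (fun i => if Q i then 1 else 0) N]
  refine Finset.sum_congr rfl (fun x _ => ?_)
  by_cases h : Q x.1
  · rw [if_pos h, if_pos h]
  · rw [if_neg h, if_neg h]

lemma map_pair_add {α : Type*} (m : Multiset α) (f0 f1 g0 g1 : α → ℝ)
    (h : ∀ x ∈ m, (f0 x = g0 x ∧ f1 x = g1 x) ∨ (f0 x = g1 x ∧ f1 x = g0 x)) :
    m.map f0 + m.map f1 = m.map g0 + m.map g1 := by
  induction m using Multiset.induction with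
  | empty => simp
  | cons a s ih =>
    have ha := h a (Multiset.mem_cons_self a s)
    have ih' := ih (fun x hx => h x (Multiset.mem_cons_of_mem hx))
    rw [Multiset.map_cons, Multiset.map_cons, Multiset.map_cons, Multiset.map_cons,
      Multiset.cons_add, Multiset.add_cons, Multiset.cons_add, Multiset.add_cons]
    rcases ha with ⟨e0, e1⟩ | ⟨e0, e1⟩
    · rw [e0, e1, ih']
    · rw [e0, e1, ih', Multiset.cons_swap]

lemma getD_sum (l : List ℝ) (j : ℕ) :
    ∑ i ∈ Finset.range j, l.getD i 0 = (l.take j).sum := by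
  induction j with
  | zero => simp
  | succ n ih =>
    rw [Finset.sum_range_succ, ih]
    by_cases h : n < l.length
    · rw [List.sum_take_succ l n h, List.getD_eq_getElem l 0 h]
    · push_neg at h
      rw [List.getD_eq_default l 0 h, List.take_of_length_le h,
        List.take_of_length_le (le_trans h (Nat.le_succ n)), add_zero]


section Main
variable {N : ℕ} {p : Fin N → ℝ} {ε : ℝ}

/-- `postMul A false + postMul A true` does not depend on `A`. -/
lemma postMul_add (A : Finset (Fin N)) :
    postMul N p ε A false + postMul N p ε A true
      = Finset.univ.val.map (fun k => (1 - ε) * p k)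
        + Finset.univ.val.map (fun k => ε * p k) := by
  apply map_pair_add
  intro k _
  by_cases hk : k ∈ A
  · right
    constructor
    · rw [if_neg (by simp [hk])]
    · rw [if_pos (by simp [hk])]
  · left
    constructor
    · rw [if_pos (by simp [hk])]
    · rw [if_neg (by simp [hk])]

lemma sortDesc_map_antitone {g : Fin N → ℝ} (hg : Antitone g) :
    sortDesc (Finset.univ.val.map g) = List.ofFn g := by
  apply sortDesc_unique
  · exact (Fin.univ_val_map g).symm
  · rw [List.pairwise_ofFn]
    intro i j hij
    exact hg hij.le

lemma topSum_map_antitone {g : Fin N → ℝ} (hg : Antitone g) (s : ℕ) :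
    topSum (Finset.univ.val.map g) s
      = ∑ k ∈ Finset.univ.filter (fun k : Fin N => k.1 < s), g k := by
  rw [topSum, sortDesc_map_antitone hg, List.sum_take_ofFn]

lemma card_univ_val : Multiset.card (Finset.univ.val : Multiset (Fin N)) = N := by
  show (Finset.univ : Finset (Fin N)).card = N
  simp

/-- The key zigzag inequality. -/
lemma zz_bound (hp : ∀ k, 0 ≤ p k) (hord : Antitone p) (hε0 : 0 ≤ ε) (hε : ε ≤ 1 / 2)
    {j : ℕ} (hj : j ≤ N) :
    topSum (postMul N p ε (AZZ N) false + postMul N p ε (AZZ N) true) (2 * j)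
      ≤ topSum (postMul N p ε (AZZ N) false) j + topSum (postMul N p ε (AZZ N) true) j := by
  set a : Fin N → ℝ := fun k => (1 - ε) * p k with ha
  set b : Fin N → ℝ := fun k => ε * p k with hb
  have hA : Antitone a := fun i k hik => mul_le_mul_of_nonneg_left (hord hik) (by linarith)
  have hB : Antitone b := fun i k hik => mul_le_mul_of_nonneg_left (hord hik) hε0
  set A' : Multiset ℝ := Finset.univ.val.map a with hA'
  set B' : Multiset ℝ := Finset.univ.val.map b with hB'
  rw [postMul_add]
  -- the top 2j elements of A' + B'
  set w : Multiset ℝ := (((sortDesc (A' + B')).take (2 * j) : List ℝ) : Multiset ℝ) with hwdef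
  have hwle : w ≤ A' + B' := take_coe_le _ _
  have hcardw : Multiset.card w = 2 * j := by
    rw [hwdef, Multiset.coe_card, List.length_take, length_sortDesc, Multiset.card_add,
      hA', hB', Multiset.card_map, Multiset.card_map, card_univ_val]
    omega
  have hsumw : w.sum = topSum (A' + B') (2 * j) := by
    rw [hwdef, Multiset.sum_coe, topSum]
  obtain ⟨u, v, hu, hv, huv⟩ := exists_split hwle
  set s := Multiset.card u with hs
  set t := Multiset.card v with ht
  have hst : s + t = 2 * j := by
    rw [hs, ht, ← Multiset.card_add, ← huv, hcardw]
  have hsN : s ≤ N := by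
    have := Multiset.card_le_card hu
    rwa [hA', Multiset.card_map, card_univ_val] at this
  have htN : t ≤ N := by
    have := Multiset.card_le_card hv
    rwa [hB', Multiset.card_map, card_univ_val] at this
  have husum : u.sum ≤ topSum A' s := sum_le_topSum hu
  have hvsum : v.sum ≤ topSum B' t := sum_le_topSum hv
  -- parity decompositions of prefix sums
  have hsplitA : ∀ n : ℕ,
      (∑ k ∈ Finset.univ.filter (fun k : Fin N => k.1 < n), a k)
        = (∑ k ∈ Finset.univ.filter (fun k : Fin N => k.1 < n ∧ k.1 % 2 = 0), a k)
          + (∑ k ∈ Finset.univ.filter (fun k : Fin N => k.1 < n ∧ k.1 % 2 = 1), a k) := by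
    intro n
    rw [← Finset.sum_filter_add_sum_filter_not
      (Finset.univ.filter (fun k : Fin N => k.1 < n)) (fun k => k.1 % 2 = 0) a,
      Finset.filter_filter, Finset.filter_filter]
    congr 1
    apply Finset.sum_congr _ (fun _ _ => rfl)
    apply Finset.filter_congr
    intro x _
    omega
  have hsplitB : ∀ n : ℕ,
      (∑ k ∈ Finset.univ.filter (fun k : Fin N => k.1 < n), b k)
        = (∑ k ∈ Finset.univ.filter (fun k : Fin N => k.1 < n ∧ k.1 % 2 = 0), b k)
          + (∑ k ∈ Finset.univ.filter (fun k : Fin N => k.1 < n ∧ k.1 % 2 = 1), b k) := by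
    intro n
    rw [← Finset.sum_filter_add_sum_filter_not
      (Finset.univ.filter (fun k : Fin N => k.1 < n)) (fun k => k.1 % 2 = 0) b,
      Finset.filter_filter, Finset.filter_filter]
    congr 1
    apply Finset.sum_congr _ (fun _ _ => rfl)
    apply Finset.filter_congr
    intro x _
    omega
  -- cardinalities of the parity pieces
  have hcard_piece : ∀ (n : ℕ) (r : ℕ), n ≤ N →
      (Finset.univ.filter (fun k : Fin N => k.1 < n ∧ k.1 % 2 = r)).card
        = ((Finset.range n).filter (fun i => i % 2 = r)).card := by
    intro n r hn
    have h2 : ((Finset.range n).filter (fun i => i % 2 = r))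
        = ((Finset.range N).filter (fun i => i < n ∧ i % 2 = r)) := by
      ext i
      simp only [Finset.mem_filter, Finset.mem_range]
      omega
    rw [h2]
    exact card_fin_filter (fun i => i < n ∧ i % 2 = r) _ _
  -- the two candidate sub-multisets of the zigzag posterior multisets
  set E : ℕ → Finset (Fin N) := fun n => Finset.univ.filter (fun k => k.1 < n ∧ k.1 % 2 = 0)
    with hE
  set O : ℕ → Finset (Fin N) := fun n => Finset.univ.filter (fun k => k.1 < n ∧ k.1 % 2 = 1)
    with hO
  set u1 : Multiset ℝ := (E s).val.map a + (O t).val.map b with hu1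
  set u0 : Multiset ℝ := (O s).val.map a + (E t).val.map b with hu0
  -- decompose the zigzag posterior multisets by parity
  have hm1 : postMul N p ε (AZZ N) true
      = (Finset.univ.val.filter (fun k : Fin N => k.1 % 2 = 0)).map a
        + (Finset.univ.val.filter (fun k : Fin N => ¬(k.1 % 2 = 0))).map b := by
    rw [postMul]
    conv_lhs => rw [← Multiset.filter_add_not (fun k : Fin N => k.1 % 2 = 0) Finset.univ.val]
    rw [Multiset.map_add]
    congr 1
    · apply Multiset.map_congr rfl
      intro x hx
      rw [Multiset.mem_filter] at hx
      rw [if_pos (by simp [AZZ, hx.2])]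
    · apply Multiset.map_congr rfl
      intro x hx
      rw [Multiset.mem_filter] at hx
      rw [if_neg (by simp [AZZ, hx.2])]
  have hm0 : postMul N p ε (AZZ N) false
      = (Finset.univ.val.filter (fun k : Fin N => k.1 % 2 = 0)).map b
        + (Finset.univ.val.filter (fun k : Fin N => ¬(k.1 % 2 = 0))).map a := by
    rw [postMul]
    conv_lhs => rw [← Multiset.filter_add_not (fun k : Fin N => k.1 % 2 = 0) Finset.univ.val]
    rw [Multiset.map_add]
    congr 1
    · apply Multiset.map_congr rfl
      intro x hx
      rw [Multiset.mem_filter] at hx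
      rw [if_neg (by simp [AZZ, hx.2])]
    · apply Multiset.map_congr rfl
      intro x hx
      rw [Multiset.mem_filter] at hx
      rw [if_pos (by simp [AZZ, hx.2])]
  -- u1 ≤ m1, u0 ≤ m0
  have hfilter_le : ∀ (P Q : Fin N → Prop) (iP : DecidablePred P) (iQ : DecidablePred Q),
      (∀ x, P x → Q x) →
      (@Finset.filter _ P iP Finset.univ).val ≤ @Multiset.filter _ Q iQ Finset.univ.val := by
    intro P Q iP iQ hPQ
    rw [Finset.filter_val]
    exact Multiset.monotone_filter_right _ (fun x hx => hPQ x hx)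
  have hu1le : u1 ≤ postMul N p ε (AZZ N) true := by
    rw [hm1, hu1]
    exact add_le_add
      (Multiset.map_le_map (hfilter_le _ _ _ _ (fun x hx => hx.2)))
      (Multiset.map_le_map (hfilter_le _ _ _ _ (fun x (hx : x.1 < t ∧ x.1 % 2 = 1) => by omega)))
  have hu0le : u0 ≤ postMul N p ε (AZZ N) false := by
    rw [hm0, hu0, add_comm (Multiset.map a (O s).val)]
    exact add_le_add
      (Multiset.map_le_map (hfilter_le _ _ _ _ (fun x hx => hx.2)))
      (Multiset.map_le_map (hfilter_le _ _ _ _ (fun x (hx : x.1 < s ∧ x.1 % 2 = 1) => by omega)))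
  -- cardinalities
  have hpar : s % 2 = t % 2 := by omega
  have hcard_u1 : Multiset.card u1 = j := by
    rw [hu1, Multiset.card_add, Multiset.card_map, Multiset.card_map]
    have h1 : (E s).card = (s + 1) / 2 := by
      rw [hE, hcard_piece s 0 hsN, card_filter_even]
    have h2 : (O t).card = t / 2 := by
      rw [hO, hcard_piece t 1 htN, card_filter_odd]
    have e1 : Multiset.card (E s).val = (E s).card := rfl
    have e2 : Multiset.card (O t).val = (O t).card := rfl
    rw [e1, e2, h1, h2]
    omega
  have hcard_u0 : Multiset.card u0 = j := by
    rw [hu0, Multiset.card_add, Multiset.card_map, Multiset.card_map]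
    have h1 : (O s).card = s / 2 := by
      rw [hO, hcard_piece s 1 hsN, card_filter_odd]
    have h2 : (E t).card = (t + 1) / 2 := by
      rw [hE, hcard_piece t 0 htN, card_filter_even]
    have e1 : Multiset.card (O s).val = (O s).card := rfl
    have e2 : Multiset.card (E t).val = (E t).card := rfl
    rw [e1, e2, h1, h2]
    omega
  -- sums
  have hsum_u1 : u1.sum = (∑ k ∈ E s, a k) + (∑ k ∈ O t, b k) := by
    rw [hu1, Multiset.sum_add, Finset.sum_eq_multiset_sum, Finset.sum_eq_multiset_sum]
  have hsum_u0 : u0.sum = (∑ k ∈ O s, a k) + (∑ k ∈ E t, b k) := by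
    rw [hu0, Multiset.sum_add, Finset.sum_eq_multiset_sum, Finset.sum_eq_multiset_sum]
  have hb1 : u1.sum ≤ topSum (postMul N p ε (AZZ N) true) j := by
    have := sum_le_topSum hu1le
    rwa [hcard_u1] at this
  have hb0 : u0.sum ≤ topSum (postMul N p ε (AZZ N) false) j := by
    have := sum_le_topSum hu0le
    rwa [hcard_u0] at this
  -- put it together
  have htopA : topSum A' s = ∑ k ∈ Finset.univ.filter (fun k : Fin N => k.1 < s), a k :=
    topSum_map_antitone hA s
  have htopB : topSum B' t = ∑ k ∈ Finset.univ.filter (fun k : Fin N => k.1 < t), b k :=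
    topSum_map_antitone hB t
  have hw2 : topSum (A' + B') (2 * j) = u.sum + v.sum := by
    rw [← hsumw, huv, Multiset.sum_add]
  rw [hw2]
  have expand : topSum A' s + topSum B' t = u1.sum + u0.sum := by
    rw [htopA, htopB, hsplitA s, hsplitB t, hsum_u1, hsum_u0, hE, hO]
    ring
  linarith

end Main

/-- **(Statement 10, main theorem.)** For any pmf `p` on `[N]` with
`p(1) ≥ ⋯ ≥ p(N)`, any lying probability `0 ≤ ε ≤ 1/2`, and any nondecreasing `f`,
the zigzag partition attains the minimum of `G^f_A(X)` over all partitions `A`. -/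
theorem stmt10 (N : ℕ) (hN : 1 ≤ N) (p : Fin N → ℝ) (hp : ∀ k, 0 ≤ p k)
    (hsum : ∑ k, p k = 1) (hord : Antitone p)
    (ε : ℝ) (hε0 : 0 ≤ ε) (hε : ε ≤ 1 / 2)
    (f : Fin N → ℝ) (hf : Monotone f) :
    IsLeast (Set.range fun A : Finset (Fin N) => Gf N p ε f A)
      (Gf N p ε f (AZZ N)) := by
  constructor
  · exact ⟨AZZ N, rfl⟩
  rintro x ⟨A, rfl⟩
  show Gf N p ε f (AZZ N) ≤ Gf N p ε f A
  -- basic cardinality facts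
  have hcard : ∀ (A : Finset (Fin N)) (y : Bool), Multiset.card (postMul N p ε A y) = N := by
    intro A y
    rw [postMul, Multiset.card_map, card_univ_val]
  -- the prefix-sum function
  set S : Finset (Fin N) → ℕ → ℝ := fun A j =>
    topSum (postMul N p ε A false) j + topSum (postMul N p ε A true) j with hS
  -- extension of f to ℕ
  set fN : ℕ → ℝ := fun i => f ⟨min i (N - 1), by omega⟩ with hfN
  have hfNmono : Monotone fN := by
    intro i j hij
    exact hf (by simp only [Fin.mk_le_mk]; omega)
  -- the per-rank mass function
  set g : Finset (Fin N) → ℕ → ℝ := fun A i =>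
    (sortDesc (postMul N p ε A false)).getD i 0 +
      (sortDesc (postMul N p ε A true)).getD i 0 with hg
  -- prefix sums of g equal S
  have hSg : ∀ (A : Finset (Fin N)) (j : ℕ), ∑ i ∈ Finset.range j, g A i = S A j := by
    intro A j
    rw [hS, hg]
    simp only [Finset.sum_add_distrib]
    rw [getD_sum, getD_sum]
    rfl
  -- Gf as a range sum
  have hGf : ∀ A : Finset (Fin N), Gf N p ε f A = ∑ i ∈ Finset.range N, fN i * g A i := by
    intro A
    rw [Gf, ← Fin.sum_univ_eq_sum_range (fun i => fN i * g A i) N]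
    apply Finset.sum_congr rfl
    intro k _
    congr 1
    rw [hfN]
    congr 1
    exact Fin.ext (by simp; omega)
  -- total sums agree
  have htot : S A N = S (AZZ N) N := by
    have key : ∀ (B : Finset (Fin N)) (y : Bool),
        topSum (postMul N p ε B y) N = (postMul N p ε B y).sum := by
      intro B y
      have h := topSum_card (postMul N p ε B y)
      rwa [hcard] at h
    rw [hS]
    simp only
    rw [key, key, key, key, ← Multiset.sum_add, ← Multiset.sum_add,
      postMul_add A, postMul_add (AZZ N)]
  -- pointwise prefix bound
  have hpre : ∀ j : ℕ, j ≤ N → S A j ≤ S (AZZ N) j := by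
    intro j hj
    have h1 : S A j ≤ topSum (postMul N p ε A false + postMul N p ε A true) (2 * j) :=
      topSum_add_le (by rw [hcard]; exact hj) (by rw [hcard]; exact hj)
    have h2 : topSum (postMul N p ε A false + postMul N p ε A true) (2 * j)
        = topSum (postMul N p ε (AZZ N) false + postMul N p ε (AZZ N) true) (2 * j) := by
      rw [postMul_add A, postMul_add (AZZ N)]
    calc S A j ≤ _ := h1
      _ = _ := h2
      _ ≤ S (AZZ N) j := zz_bound hp hord hε0 hε hj
  -- Abel summation
  have habel : ∀ A : Finset (Fin N), Gf N p ε f A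
      = fN (N - 1) * S A N
        - ∑ i ∈ Finset.range (N - 1), (fN (i + 1) - fN i) * S A (i + 1) := by
    intro A
    rw [hGf A]
    have := Finset.sum_range_by_parts fN (g A) N
    simp only [smul_eq_mul] at this
    rw [this, hSg]
    congr 1
    apply Finset.sum_congr rfl
    intro i _
    rw [hSg]
  rw [habel A, habel (AZZ N), htot]
  apply sub_le_sub_left
  apply Finset.sum_le_sum
  intro i hi
  rw [Finset.mem_range] at hi
  have hmono : 0 ≤ fN (i + 1) - fN i := by
    have := hfNmono (Nat.le_succ i)
    linarith
  exact mul_le_mul_of_nonneg_left (hpre (i + 1) (by omega)) hmono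

end
end

section
/- For any bijection $\sigma:[2N]\to\Pi$ induced by some partition $A\subseteq[N]$ and any nondecreasing $f:[N]\to\mathbb{R}$, we have $\sum_{k\in[N]}f(k)[\sigma(2k-1)+\sigma(2k)]\ge\sum_{k\in[N]}f(k)[\sigma^{\downarrow}(2k-1)+\sigma^{\downarrow}(2k)]$, where $\sigma^{\downarrow}$ is the descending ordering of $\Pi$. Consequently $\min_{A\subseteq[N]}G^f_A(X)$ is bounded below by the unconstrained minimum $\sum_k f(k)[\sigma^{\downarrow}(2k-1)+\sigma^{\downarrow}(2k)]$. -/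
open scoped Classical

noncomputable section

/-- Rearrangement: weighted sum against the descending ordering is minimal. -/
lemma keyA {n : ℕ} (g b s : Fin n → ℝ) (hg : Monotone g) (hb : StrictAnti b)
    (hs : Function.Injective s) (hr : Set.range s = Set.range b) :
    ∑ j, g j * b j ≤ ∑ j, g j * s j := by
  have hbi : Function.Injective b := hb.injective
  let e1 := Equiv.ofInjective s hs
  let e2 := Equiv.ofInjective b hbi
  let τ : Equiv.Perm (Fin n) := e1.trans ((Equiv.setCongr hr).trans e2.symm)
  have hbs : ∀ j, b (τ j) = s j := by
    intro j
    have : (e2 (τ j) : ℝ) = s j := by simp [τ, e2, e1]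
    simpa [e2, Equiv.ofInjective] using this
  have hav : Antivary g b := by
    intro i j h
    have : j < i := by
      by_contra hc
      push_neg at hc
      exact absurd h (not_lt.2 (hb.antitone hc))
    exact hg this.le
  have h1 := hav.sum_smul_le_sum_smul_comp_perm (σ := τ)
  simp only [smul_eq_mul] at h1
  calc ∑ j, g j * b j ≤ ∑ j, g j * b (τ j) := h1
    _ = ∑ j, g j * s j := by simp [hbs]

/-- Splitting a sum over `Fin (2N)` into σ-sibling pairs. -/
lemma sumsplit {N : ℕ} (F : Fin (2 * N) → ℝ) :
    ∑ j, F j = ∑ k : Fin N, (F (i0 k) + F (i1 k)) := by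
  let e : Fin N × Bool ≃ Fin (2 * N) :=
    { toFun := fun x => if x.2 then i1 x.1 else i0 x.1
      invFun := fun j => (⟨j.1 / 2, by have := j.isLt; omega⟩, decide (j.1 % 2 = 1))
      left_inv := by
        rintro ⟨k, b⟩
        cases b <;> simp [i0, i1, Fin.ext_iff] <;> omega
      right_inv := by
        intro j
        have := j.isLt
        by_cases h : j.1 % 2 = 1 <;> simp [h, i0, i1, Fin.ext_iff] <;> omega }
  rw [← Equiv.sum_comp e F, Fintype.sum_prod_type]
  congr 1
  ext k
  simp [e, Fintype.sum_bool, add_comm]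

lemma map_add_map {α β : Type*} (g h : α → β) (s : Multiset α) :
    s.map g + s.map h = s.bind (fun a => {g a, h a}) := by
  induction s using Multiset.induction with
  | empty => simp
  | cons a s ih =>
    simp only [Multiset.map_cons, Multiset.cons_bind, ← ih]
    simp [Multiset.insert_eq_cons, Multiset.cons_swap]

/-- The two posterior multisets together are the multiset of all posterior terms. -/
lemma postsum (N : ℕ) (p : Fin N → ℝ) (ε : ℝ) (B : Finset (Fin N)) :
    postMul N p ε B false + postMul N p ε B true
      = Multiset.map (pt N p ε) (Finset.univ : Finset (Fin N × Bool)).val := by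
  have huniv : (Finset.univ : Finset (Fin N × Bool)).val
      = (Finset.univ.val.map (fun k : Fin N => (k, true)))
        + (Finset.univ.val.map (fun k : Fin N => (k, false))) := by
    rw [← Finset.univ_product_univ, Finset.product_val, Fintype.univ_bool]
    show _ ×ˢ (true ::ₘ false ::ₘ 0) = _
    rw [Multiset.product_cons, Multiset.product_cons, Multiset.product_zero]
    simp
  rw [huniv, Multiset.map_add, Multiset.map_map, Multiset.map_map]
  rw [postMul, postMul, map_add_map, map_add_map]
  refine Multiset.bind_congr (fun k _ => ?_)
  by_cases hk : k ∈ B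
  · simp only [pt, hk, iff_true, iff_false, if_true, if_false, not_true]
    exact Multiset.cons_swap _ _ 0
  · simp [pt, hk]

lemma sortDesc_length (N : ℕ) (p : Fin N → ℝ) (ε : ℝ) (B : Finset (Fin N)) (y : Bool) :
    (sortDesc (postMul N p ε B y)).length = N := by
  simp [sortDesc, postMul, Multiset.length_sort]

/-- **(Statement 12.)** For any bijection `σ : [2N] → Π` induced by a partition `A`
(i.e. `{σ(2k-1), σ(2k)} = {π_A^0(k), π_A^1(k)}` for all `k`) and any nondecreasing
`f`, the sum `∑ f(k)(σ(2k-1)+σ(2k))` is bounded below by the unconstrained minimum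
`∑ f(k)(σ↓(2k-1)+σ↓(2k))`; consequently `G^f_B(X)` is bounded below by the
unconstrained minimum for every partition `B`. -/
theorem stmt12 (N : ℕ) (hN : 1 ≤ N) (p : Fin N → ℝ) (hp : ∀ k, 0 < p k)
    (hsum : ∑ k, p k = 1)
    (ε : ℝ) (hε0 : 0 < ε) (hε : ε < 1 / 2)
    (hinj : Function.Injective (pt N p ε))
    (σd : Fin (2 * N) → ℝ) (hσd : StrictAnti σd) (hσr : Set.range σd = PiAll N p ε)
    (f : Fin N → ℝ) (hf : Monotone f)
    (A : Finset (Fin N)) (σ : Fin (2 * N) → ℝ) (hσinj : Function.Injective σ)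
    (hσrange : Set.range σ = PiAll N p ε)
    (hind : ∀ k : Fin N, ({σ (i0 k), σ (i1 k)} : Set ℝ) =
      {(sortDesc (postMul N p ε A false)).getD k.1 0,
       (sortDesc (postMul N p ε A true)).getD k.1 0}) :
    (∑ k : Fin N, f k * (σd (i0 k) + σd (i1 k))) ≤
        ∑ k : Fin N, f k * (σ (i0 k) + σ (i1 k)) ∧
      ∀ B : Finset (Fin N),
        (∑ k : Fin N, f k * (σd (i0 k) + σd (i1 k))) ≤ Gf N p ε f B := by
  classical
  -- the weight function
  have hdiv : ∀ j : Fin (2 * N), j.1 / 2 < N := fun j => by have := j.isLt; omega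
  set g : Fin (2 * N) → ℝ := fun j => f ⟨j.1 / 2, hdiv j⟩ with hg_def
  have hg : Monotone g := by
    intro j j' hj
    exact hf (by simp only [Fin.mk_le_mk]; exact Nat.div_le_div_right hj)
  have hg0 : ∀ k : Fin N, g (i0 k) = f k := fun k => by
    simp only [hg_def, i0]
    congr 1
    exact Fin.ext (by show 2 * k.1 / 2 = k.1; omega)
  have hg1 : ∀ k : Fin N, g (i1 k) = f k := fun k => by
    simp only [hg_def, i1]
    congr 1
    exact Fin.ext (by show (2 * k.1 + 1) / 2 = k.1; omega)
  have hsum_eq : ∀ h : Fin (2 * N) → ℝ,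
      ∑ k : Fin N, f k * (h (i0 k) + h (i1 k)) = ∑ j, g j * h j := by
    intro h
    rw [sumsplit (fun j => g j * h j)]
    refine Finset.sum_congr rfl (fun k _ => ?_)
    rw [hg0 k, hg1 k]; ring
  have hrange_eq : Set.range σ = Set.range σd := hσrange.trans hσr.symm
  constructor
  · rw [hsum_eq σ, hsum_eq σd]
    exact keyA g σd σ hg hσd hσinj hrange_eq
  · intro B
    set L0 := sortDesc (postMul N p ε B false) with hL0
    set L1 := sortDesc (postMul N p ε B true) with hL1
    have hL0len : L0.length = N := sortDesc_length N p ε B false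
    have hL1len : L1.length = N := sortDesc_length N p ε B true
    set L := L0 ++ L1 with hL
    have hLlen : L.length = 2 * N := by
      simp [hL, hL0len, hL1len]; omega
    have hLm : ((L : List ℝ) : Multiset ℝ)
        = Multiset.map (pt N p ε) (Finset.univ : Finset (Fin N × Bool)).val := by
      rw [hL]
      rw [show ((↑(L0 ++ L1) : Multiset ℝ)) = (↑L0 + ↑L1 : Multiset ℝ) from rfl]
      rw [hL0, hL1, sortDesc_coe, sortDesc_coe]
      exact postsum N p ε B
    have hLnd : L.Nodup := by
      have : (Multiset.map (pt N p ε) (Finset.univ : Finset (Fin N × Bool)).val).Nodup :=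
        Multiset.Nodup.map hinj Finset.univ.nodup
      rw [← hLm] at this
      exact this
    -- index map
    set r : Fin (2 * N) → ℕ := fun j => if j.1 % 2 = 0 then j.1 / 2 else N + j.1 / 2 with hr_def
    have hrlt : ∀ j, r j < L.length := by
      intro j
      have := j.isLt
      rw [hLlen, hr_def]
      dsimp only
      split <;> omega
    set σB : Fin (2 * N) → ℝ := fun j => L.getD (r j) 0 with hσB_def
    have hσBval : ∀ j, σB j = L[r j]'(hrlt j) := fun j => List.getD_eq_getElem L 0 (hrlt j)
    have hrinj : Function.Injective r := by
      intro j j' h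
      have h1 := j.isLt
      have h2 := j'.isLt
      rw [hr_def] at h
      dsimp only at h
      apply Fin.ext
      split at h <;> split at h <;> omega
    have hσBinj : Function.Injective σB := by
      intro j j' h
      rw [hσBval j, hσBval j'] at h
      exact hrinj ((hLnd.getElem_inj_iff).1 h)
    have hσBrange : Set.range σB = PiAll N p ε := by
      ext x
      constructor
      · rintro ⟨j, rfl⟩
        rw [hσBval j]
        have hx : (L[r j]'(hrlt j)) ∈ L := List.getElem_mem _
        rw [← Multiset.mem_coe, hLm, Multiset.mem_map] at hx
        obtain ⟨a, _, ha⟩ := hx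
        exact ⟨a, ha⟩
      · rintro ⟨a, rfl⟩
        have hx : pt N p ε a ∈ L := by
          rw [← Multiset.mem_coe, hLm, Multiset.mem_map]
          exact ⟨a, by simp, rfl⟩
        obtain ⟨i, hi, hix⟩ := List.mem_iff_getElem.1 hx
        have hi2 : i < 2 * N := hLlen ▸ hi
        refine ⟨⟨if i < N then 2 * i else 2 * (i - N) + 1, by split <;> omega⟩, ?_⟩
        rw [hσBval]
        rw [← hix]
        congr 1
        rw [hr_def]
        dsimp only
        split <;> split <;> omega
    -- values on sibling indices
    have hσB0 : ∀ k : Fin N, σB (i0 k) = L0.getD k.1 0 := by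
      intro k
      rw [hσB_def]
      dsimp only
      have hidx : r (i0 k) = k.1 := by
        rw [hr_def]; show (if 2 * k.1 % 2 = 0 then 2 * k.1 / 2 else N + 2 * k.1 / 2) = k.1
        split <;> omega
      rw [hidx, hL, List.getD_append _ _ _ _ (by rw [hL0len]; exact k.isLt)]
    have hσB1 : ∀ k : Fin N, σB (i1 k) = L1.getD k.1 0 := by
      intro k
      rw [hσB_def]
      dsimp only
      have hidx : r (i1 k) = N + k.1 := by
        rw [hr_def]
        show (if (2 * k.1 + 1) % 2 = 0 then (2 * k.1 + 1) / 2 else N + (2 * k.1 + 1) / 2) = N + k.1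
        split <;> omega
      rw [hidx, hL, List.getD_append_right _ _ _ _ (by omega : L0.length ≤ N + k.1)]
      congr 1
      omega
    have hGf : Gf N p ε f B = ∑ j, g j * σB j := by
      rw [Gf, ← hsum_eq σB]
      refine Finset.sum_congr rfl (fun k _ => ?_)
      rw [hσB0 k, hσB1 k, ← hL0, ← hL1]
    rw [hGf, hsum_eq σd]
    exact keyA g σd σB hg hσd hσBinj (hσBrange.trans hσr.symm)


end
end

section
/- If $\epsilon<1/2$ is close enough to $1/2$ so that $\epsilon p(k)\ge\bar\epsilon p(k+1)$ for all $k\in[N-1]$, then the graph $\mathcal{G}_{\sigma^{\downarrow}}$ consists of exactly $N$ isolated edges (each posterior-sibling pair $\{\epsilon p(k),\bar\epsilon p(k)\}$ is also a $\sigma^{\downarrow}$-sibling pair), and hence there are $2^N$ optimal partitions. -/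
open scoped Classical

noncomputable section

lemma sortDesc_anti {N : ℕ} (q : Fin N → ℝ) (hq : StrictAnti q) :
    sortDesc (Finset.univ.val.map q) = List.ofFn q := by
  unfold sortDesc
  rw [List.reverse_eq_iff]
  refine (fun h1 h2 h3 => List.Perm.eq_of_pairwise' (r := (· ≤ ·)) h2 h3 h1) ?_ ?_ ?_
  · rw [← Multiset.coe_eq_coe, Multiset.sort_eq, Multiset.coe_reverse, Fin.univ_val_map]
  · exact Multiset.pairwise_sort _ _
  · rw [List.pairwise_reverse, List.pairwise_ofFn]
    intro i j h
    exact (hq h).le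

lemma getD_ofFn {N : ℕ} (q : Fin N → ℝ) (k : Fin N) :
    (List.ofFn q).getD k.1 0 = q k := by
  rw [List.getD_eq_getElem _ _ (by simpa using k.isLt)]
  simp

/-- **(Statement 13.)** If `ε < 1/2` is close enough to `1/2` that
`ε p(k) ≥ (1-ε) p(k+1)` for all `k`, then every posterior-sibling pair
`{ε p(k), (1-ε) p(k)}` is also a σ↓-sibling pair (so `𝒢_{σ↓}` consists of exactly
`N` isolated edges), and hence all `2^N` partitions are optimal:
the number of partitions minimizing `G^f_A(X)` is `2 ^ N`. -/
theorem stmt13 (N : ℕ) (hN : 1 ≤ N) (p : Fin N → ℝ) (hp : ∀ k, 0 < p k)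
    (hsum : ∑ k, p k = 1) (hpanti : StrictAnti p)
    (ε : ℝ) (hε0 : 0 < ε) (hε : ε < 1 / 2)
    (hinj : Function.Injective (pt N p ε))
    (σd : Fin (2 * N) → ℝ) (hσd : StrictAnti σd) (hσr : Set.range σd = PiAll N p ε)
    (hclose : ∀ k j : Fin N, j.1 = k.1 + 1 → (1 - ε) * p j ≤ ε * p k)
    (f : Fin N → ℝ) (hf : Monotone f) :
    (∀ k : Fin N, ∃ j : Fin N,
        ({σd (i0 j), σd (i1 j)} : Set ℝ) = {pt N p ε (k, false), pt N p ε (k, true)}) ∧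
      Nat.card {A : Finset (Fin N) //
          ∀ B : Finset (Fin N), Gf N p ε f A ≤ Gf N p ε f B} = 2 ^ N := by
  have h12 : ε < 1 - ε := by linarith
  -- strict version of hclose, and pairwise comparison
  have pair_lt : ∀ i j : Fin N, i < j → (1 - ε) * p j < ε * p i := by
    intro i j hij
    have hij' : i.1 < j.1 := hij
    have hm : i.1 + 1 < N := by have := j.isLt; omega
    set m : Fin N := ⟨i.1 + 1, hm⟩ with hmdef
    have h1 : (1 - ε) * p m ≤ ε * p i := hclose i m rfl
    have hne : (1 - ε) * p m ≠ ε * p i := by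
      intro h
      have : pt N p ε (m, true) = pt N p ε (i, false) := by simpa [pt] using h
      have := hinj this
      simp at this
    have h2 : p j ≤ p m := hpanti.antitone (show m ≤ j from by
      simp only [Fin.le_def]; show i.1 + 1 ≤ j.1; omega)
    calc (1 - ε) * p j ≤ (1 - ε) * p m := by nlinarith
      _ < ε * p i := lt_of_le_of_ne h1 hne
  -- bounds on posterior terms
  have hub : ∀ (k : Fin N) (b : Bool), pt N p ε (k, b) ≤ (1 - ε) * p k := by
    intro k b; cases b <;> simp [pt] <;> nlinarith [hp k]
  have hlb : ∀ (k : Fin N) (b : Bool), ε * p k ≤ pt N p ε (k, b) := by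
    intro k b; cases b <;> simp [pt] <;> nlinarith [hp k]
  -- the canonical descending enumeration
  set g : Fin (2 * N) → ℝ := fun i =>
    pt N p ε (⟨i.1 / 2, by have := i.isLt; omega⟩, decide (i.1 % 2 = 0)) with hgdef
  have hg : StrictAnti g := by
    intro i j hij
    have hij' : i.1 < j.1 := hij
    rcases Nat.lt_or_ge (i.1 / 2) (j.1 / 2) with h | h
    · -- different pairs
      calc g j ≤ (1 - ε) * p ⟨j.1 / 2, _⟩ := hub _ _
        _ < ε * p ⟨i.1 / 2, _⟩ := pair_lt _ _ h
        _ ≤ g i := hlb _ _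
    · -- same pair: i even, j = i+1
      have hd : i.1 / 2 = j.1 / 2 := by omega
      have he : i.1 % 2 = 0 := by omega
      have ho : j.1 % 2 = 1 := by omega
      have : g i = pt N p ε (⟨i.1 / 2, by have := i.isLt; omega⟩, true) := by
        simp [hgdef, he]
      rw [this]
      have : g j = pt N p ε (⟨i.1 / 2, by have := i.isLt; omega⟩, false) := by
        simp only [hgdef, ho]
        congr 1
        simp [hd]
      rw [this]
      simp only [pt]
      norm_num
      nlinarith [hp (⟨i.1 / 2, by have := i.isLt; omega⟩ : Fin N)]
  have hgr : Set.range g = PiAll N p ε := by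
    apply Set.Subset.antisymm
    · rintro _ ⟨i, rfl⟩; exact ⟨_, rfl⟩
    · rintro _ ⟨⟨k, b⟩, rfl⟩
      cases b
      · exact ⟨i1 k, by simp [hgdef, i1, Nat.mul_add_mod, Nat.mul_add_div]⟩
      · exact ⟨i0 k, by simp [hgdef, i0, Nat.mul_mod_right, Nat.mul_div_cancel_left]⟩
  have hσg : σd = g := Set.range_injOn_strictAnti hσd hg (hσr.trans hgr.symm)
  constructor
  · intro k
    refine ⟨k, ?_⟩
    have e0 : σd (i0 k) = pt N p ε (k, true) := by
      rw [hσg]; simp [hgdef, i0, Nat.mul_mod_right, Nat.mul_div_cancel_left]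
    have e1 : σd (i1 k) = pt N p ε (k, false) := by
      rw [hσg]; simp [hgdef, i1, Nat.mul_add_mod, Nat.mul_add_div]
    rw [e0, e1, Set.pair_comm]
  · -- Gf is constant
    have hGf : ∀ A : Finset (Fin N), Gf N p ε f A = ∑ k, f k * p k := by
      intro A
      unfold Gf postMul
      have hq : ∀ y : Bool, StrictAnti
          (fun k : Fin N => (if ((k ∈ A) ↔ y = true) then 1 - ε else ε) * p k) := by
        intro y i j hij
        have h1 : (if ((j ∈ A) ↔ y = true) then 1 - ε else ε) * p j ≤ (1 - ε) * p j := by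
          split <;> nlinarith [hp j]
        have h2 : ε * p i ≤ (if ((i ∈ A) ↔ y = true) then 1 - ε else ε) * p i := by
          split <;> nlinarith [hp i]
        calc (if ((j ∈ A) ↔ y = true) then 1 - ε else ε) * p j
            ≤ (1 - ε) * p j := h1
          _ < ε * p i := pair_lt i j hij
          _ ≤ _ := h2
      rw [sortDesc_anti _ (hq false), sortDesc_anti _ (hq true)]
      apply Finset.sum_congr rfl
      intro k _
      rw [getD_ofFn, getD_ofFn]
      congr 1
      by_cases hk : k ∈ A <;> simp [hk] <;> ring
    have hall : ∀ A : Finset (Fin N), ∀ B, Gf N p ε f A ≤ Gf N p ε f B :=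
      fun A B => le_of_eq ((hGf A).trans (hGf B).symm)
    rw [Nat.card_congr (Equiv.subtypeUnivEquiv hall), Nat.card_eq_fintype_card,
      Fintype.card_finset, Fintype.card_fin]


end
end

section
/- Suppose the distribution $p$ and noise level $\epsilon$ satisfy $\max_{k\in[N-2]} p(k+2)/p(k) < \epsilon/\bar\epsilon < \min_{k\in[N-1]} p(k+1)/p(k)$. Then the graph $\mathcal{G}_{\sigma^{\downarrow}}$ is a single cycle on $2N$ vertices, and consequently the zigzag partition is the unique optimal partition up to complementation. -/
open scoped Classical

noncomputable section

def e0' (N : ℕ) (k : Fin N) : Fin N × Bool :=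
  if k.1 = 0 then (k, true) else (⟨k.1 - 1, by have := k.isLt; omega⟩, false)

def e1' (N : ℕ) (k : Fin N) : Fin N × Bool :=
  if h : k.1 = N - 1 then (k, false) else (⟨k.1 + 1, by have := k.isLt; omega⟩, true)

def qv (N : ℕ) (hN : 2 ≤ N) (v : Fin N × Bool) : Fin N × Bool :=
  if v.2 then
    if v.1.1 = 0 then (⟨1, by omega⟩, true)
    else if v.1.1 = 1 then (⟨0, by omega⟩, true)
    else (⟨v.1.1 - 2, by have := v.1.isLt; omega⟩, false)
  else
    if h1 : v.1.1 = N - 1 then (⟨N - 2, by omega⟩, false)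
    else if h2 : v.1.1 = N - 2 then (⟨N - 1, by omega⟩, false)
    else (⟨v.1.1 + 2, by have := v.1.isLt; omega⟩, true)

lemma qv_e0 (N : ℕ) (hN : 2 ≤ N) (k : Fin N) : qv N hN (e0' N k) = e1' N k := by
  have hk := k.isLt
  by_cases h0 : k.1 = 0
  · rw [e0', if_pos h0, e1', dif_neg (by omega)]
    simp [qv, h0, Prod.ext_iff, Fin.ext_iff]
  · rw [e0', if_neg h0]
    by_cases h1 : k.1 = N - 1
    · rw [e1', dif_pos h1]
      simp [qv, show k.1 - 1 = N - 2 by omega, show ¬(N - 2 = N - 1) by omega, Prod.ext_iff, Fin.ext_iff]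
      omega
    · rw [e1', dif_neg h1]
      simp [qv, show ¬(k.1 - 1 = N - 1) by omega, show ¬(k.1 - 1 = N - 2) by omega,
        Prod.ext_iff, Fin.ext_iff]
      omega

lemma qv_e1 (N : ℕ) (hN : 2 ≤ N) (k : Fin N) : qv N hN (e1' N k) = e0' N k := by
  have hk := k.isLt
  by_cases h1 : k.1 = N - 1
  · rw [e1', dif_pos h1, e0', if_neg (by omega)]
    simp [qv, h1, Prod.ext_iff, Fin.ext_iff]
    omega
  · rw [e1', dif_neg h1]
    by_cases h0 : k.1 = 0
    · rw [e0', if_pos h0]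
      simp [qv, show ¬(k.1 + 1 = 0) by omega, show k.1 + 1 = 1 by omega,
        Prod.ext_iff, Fin.ext_iff]
      omega
    · rw [e0', if_neg h0]
      simp [qv, show ¬(k.1 + 1 = 0) by omega, show ¬(k.1 + 1 = 1) by omega,
        Prod.ext_iff, Fin.ext_iff]
      try omega

lemma qv_ne (N : ℕ) (hN : 2 ≤ N) (u : Fin N × Bool) : qv N hN u ≠ u := by
  obtain ⟨a, b⟩ := u
  have ha := a.isLt
  cases b <;> simp only [qv] <;> split_ifs <;>
    simp only [ne_eq, Prod.mk.injEq, Fin.ext_iff, not_and] <;>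
    intro h <;> simp_all <;> omega

lemma qv_ne_sib (N : ℕ) (hN : 2 ≤ N) (u : Fin N × Bool) : qv N hN u ≠ (u.1, !u.2) := by
  obtain ⟨a, b⟩ := u
  have ha := a.isLt
  cases b <;> simp only [qv] <;> split_ifs <;>
    simp only [ne_eq, Prod.mk.injEq, Fin.ext_iff, Bool.not_false, Bool.not_true, not_and] <;>
    intro h <;> simp_all <;> omega

lemma qv_pair (N : ℕ) (hN : 2 ≤ N) (u : Fin N × Bool) :
    ∃ k : Fin N, (u = e0' N k ∧ qv N hN u = e1' N k) ∨ (u = e1' N k ∧ qv N hN u = e0' N k) := by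
  obtain ⟨a, b⟩ := u
  have ha := a.isLt
  cases b
  · by_cases h1 : a.1 = N - 1
    · refine ⟨a, Or.inr ⟨by rw [e1', dif_pos h1], ?_⟩⟩
      rw [show ((a, false) : Fin N × Bool) = e1' N a by rw [e1', dif_pos h1], qv_e1]
    · by_cases h2 : a.1 = N - 2
      · refine ⟨⟨N - 1, by omega⟩, Or.inl ⟨?_, ?_⟩⟩
        · rw [e0', if_neg (by simp; omega)]
          simp [Prod.ext_iff, Fin.ext_iff]
          try omega
        · have : (a, false) = e0' N ⟨N - 1, by omega⟩ := by
            rw [e0', if_neg (by simp; omega)]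
            simp [Prod.ext_iff, Fin.ext_iff]
            try omega
          rw [this, qv_e0]
      · refine ⟨⟨a.1 + 1, by omega⟩, Or.inl ⟨?_, ?_⟩⟩
        · rw [e0', if_neg (by simp)]
          simp [Prod.ext_iff, Fin.ext_iff]
        · have : (a, false) = e0' N ⟨a.1 + 1, by omega⟩ := by
            rw [e0', if_neg (by simp)]
            simp [Prod.ext_iff, Fin.ext_iff]
          rw [this, qv_e0]
  · by_cases h1 : a.1 = 0
    · refine ⟨a, Or.inl ⟨by rw [e0', if_pos h1], ?_⟩⟩
      rw [show ((a, true) : Fin N × Bool) = e0' N a by rw [e0', if_pos h1], qv_e0]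
    · by_cases h2 : a.1 = 1
      · refine ⟨⟨0, by omega⟩, Or.inr ⟨?_, ?_⟩⟩
        · rw [e1', dif_neg (by simp; omega)]
          simp [Prod.ext_iff, Fin.ext_iff]
          try omega
        · have : (a, true) = e1' N ⟨0, by omega⟩ := by
            rw [e1', dif_neg (by simp; omega)]
            simp [Prod.ext_iff, Fin.ext_iff]
            try omega
          rw [this, qv_e1]
      · refine ⟨⟨a.1 - 1, by omega⟩, Or.inr ⟨?_, ?_⟩⟩
        · rw [e1', dif_neg (by simp; omega)]
          simp [Prod.ext_iff, Fin.ext_iff]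
          try omega
        · have : (a, true) = e1' N ⟨a.1 - 1, by omega⟩ := by
            rw [e1', dif_neg (by simp; omega)]
            simp [Prod.ext_iff, Fin.ext_iff]
            try omega
          rw [this, qv_e1]

lemma strictAntiFin {m : ℕ} (f : Fin m → ℝ)
    (h : ∀ i (hi : i + 1 < m), f ⟨i + 1, hi⟩ < f ⟨i, Nat.lt_of_succ_lt hi⟩) :
    StrictAnti f := by
  have key : ∀ b (hb : b < m) a (ha : a < m), a < b → f ⟨b, hb⟩ < f ⟨a, ha⟩ := by
    intro b
    induction b with
    | zero => intro hb a ha h'; omega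
    | succ n ih =>
      intro hb a ha h'
      rcases Nat.lt_or_ge a n with h2 | h2
      · exact lt_trans (h n hb) (ih (by omega) a ha h2)
      · have : a = n := by omega
        subst this
        exact h a hb
  intro a b hab
  simpa using key b.1 b.2 a.1 a.2 hab

def sfun (N : ℕ) (i : Fin (2 * N)) : Fin N × Bool :=
  if i.1 % 2 = 0 then e0' N ⟨i.1 / 2, by have := i.isLt; omega⟩
  else e1' N ⟨i.1 / 2, by have := i.isLt; omega⟩

lemma sfun_i0 (N : ℕ) (k : Fin N) : sfun N (i0 k) = e0' N k := by
  simp only [sfun, i0]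
  refine (if_pos (by omega : 2 * k.1 % 2 = 0)).trans ?_
  congr 1
  exact Fin.ext (by (try simp only [Fin.val_mk]); try omega)

lemma sfun_i1 (N : ℕ) (k : Fin N) : sfun N (i1 k) = e1' N k := by
  simp only [sfun, i1]
  refine (if_neg (by omega : ¬ (2 * k.1 + 1) % 2 = 0)).trans ?_
  congr 1
  exact Fin.ext (by (try simp only [Fin.val_mk]); try omega)


set_option maxHeartbeats 1000000 in
/-- **(Statement 14.)** If `max_k p(k+2)/p(k) < ε/(1-ε) < min_k p(k+1)/p(k)`, then
the graph `𝒢_{σ↓}` is a single cycle on all `2N` vertices (connected and 2-regular),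
and the zigzag partition is the unique optimal partition up to complementation: the
partitions that are posterior-respecting with `σ↓` are exactly `A_ZZ` and its
complement. -/
theorem stmt14 (N : ℕ) (hN : 2 ≤ N) (p : Fin N → ℝ) (hp : ∀ k, 0 < p k)
    (hsum : ∑ k, p k = 1) (hpanti : StrictAnti p)
    (ε : ℝ) (hε0 : 0 < ε) (hε : ε < 1 / 2)
    (hinj : Function.Injective (pt N p ε))
    (σd : Fin (2 * N) → ℝ) (hσd : StrictAnti σd) (hσr : Set.range σd = PiAll N p ε)
    (hr1 : ∀ i j : Fin N, j.1 = i.1 + 2 → p j / p i < ε / (1 - ε))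
    (hr2 : ∀ i j : Fin N, j.1 = i.1 + 1 → ε / (1 - ε) < p j / p i) :
    (Gsig N p ε σd).Connected ∧
      (∀ v, ((Gsig N p ε σd).neighborSet v).ncard = 2) ∧
      ({A : Finset (Fin N) | PR N p ε σd A} = {AZZ N, (AZZ N)ᶜ}) := by
  classical
  have hε1 : (0:ℝ) < 1 - ε := by linarith
  have ptT : ∀ k : Fin N, pt N p ε (k, true) = (1 - ε) * p k := fun k => by simp [pt]
  have ptF : ∀ k : Fin N, pt N p ε (k, false) = ε * p k := fun k => by simp [pt]
  have hab : ∀ i j : Fin N, j.1 = i.1 + 2 → (1 - ε) * p j < ε * p i := by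
    intro i j h
    have h' := hr1 i j h
    rw [div_lt_div_iff₀ (hp i) hε1] at h'
    rw [mul_comm ((1:ℝ)-ε) (p j)]; exact h'
  have hba : ∀ i j : Fin N, j.1 = i.1 + 1 → ε * p i < (1 - ε) * p j := by
    intro i j h
    have h' := hr2 i j h
    rw [div_lt_div_iff₀ hε1 (hp i)] at h'
    rw [mul_comm ((1:ℝ)-ε) (p j)]; exact h'
  have hanti : StrictAnti (pt N p ε ∘ sfun N) := by
    apply strictAntiFin
    intro i hi
    rcases Nat.even_or_odd i with ⟨j, hj⟩ | ⟨j, hj⟩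
    · have hjN : j < N := by omega
      have E1 : sfun N ⟨i, Nat.lt_of_succ_lt hi⟩ = e0' N ⟨j, hjN⟩ := by
        have he : (⟨i, Nat.lt_of_succ_lt hi⟩ : Fin (2*N)) = i0 ⟨j, hjN⟩ :=
          Fin.ext (by simp [i0]; omega)
        rw [he, sfun_i0]
      have E2 : sfun N ⟨i+1, hi⟩ = e1' N ⟨j, hjN⟩ := by
        have he : (⟨i+1, hi⟩ : Fin (2*N)) = i1 ⟨j, hjN⟩ :=
          Fin.ext (by simp [i1]; omega)
        rw [he, sfun_i1]
      rw [Function.comp_apply, Function.comp_apply, E1, E2]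
      by_cases h0 : j = 0
      · subst h0
        rw [e0', if_pos rfl, e1', dif_neg (by (try simp only [Fin.val_mk]); try omega)]
        rw [ptT, ptT]
        have hlt : p ⟨0+1, by omega⟩ < p ⟨0, by omega⟩ := hpanti (by simp [Fin.lt_def])
        nlinarith
      · by_cases hN1 : j = N - 1
        · rw [e0', if_neg (by (try simp only [Fin.val_mk]); try omega),
            e1', dif_pos (by (try simp only [Fin.val_mk]); try omega)]
          rw [ptF, ptF]
          have hlt : p ⟨j, hjN⟩ < p ⟨j-1, by omega⟩ := hpanti (by simp [Fin.lt_def]; omega)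
          nlinarith
        · rw [e0', if_neg (by (try simp only [Fin.val_mk]); try omega),
            e1', dif_neg (by (try simp only [Fin.val_mk]); try omega)]
          rw [ptT, ptF]
          exact hab ⟨j-1, by omega⟩ ⟨j+1, by omega⟩ (by (try simp only [Fin.val_mk]); try omega)
    · have hjN : j + 1 < N := by omega
      have E1 : sfun N ⟨i, Nat.lt_of_succ_lt hi⟩ = e1' N ⟨j, by omega⟩ := by
        have he : (⟨i, Nat.lt_of_succ_lt hi⟩ : Fin (2*N)) = i1 ⟨j, by omega⟩ :=
          Fin.ext (by simp [i1]; omega)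
        rw [he, sfun_i1]
      have E2 : sfun N ⟨i+1, hi⟩ = e0' N ⟨j+1, hjN⟩ := by
        have he : (⟨i+1, hi⟩ : Fin (2*N)) = i0 ⟨j+1, hjN⟩ :=
          Fin.ext (by simp [i0]; omega)
        rw [he, sfun_i0]
      rw [Function.comp_apply, Function.comp_apply, E1, E2]
      rw [e0', if_neg (by (try simp only [Fin.val_mk]); try omega),
        e1', dif_neg (by (try simp only [Fin.val_mk]); try omega)]
      rw [ptF, ptT]
      exact hba ⟨j+1-1, by omega⟩ ⟨j+1, by omega⟩ (by (try simp only [Fin.val_mk]); try omega)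
  have hsurj : Function.Surjective (sfun N) := by
    rintro ⟨a, b⟩
    have ha := a.isLt
    cases b
    · by_cases h1 : a.1 = N - 1
      · refine ⟨⟨2*N - 1, by omega⟩, ?_⟩
        have he : (⟨2*N-1, by omega⟩ : Fin (2*N)) = i1 ⟨N-1, by omega⟩ :=
          Fin.ext (by simp [i1]; omega)
        rw [he, sfun_i1, e1', dif_pos (by (try simp only [Fin.val_mk]); try omega)]
        simp [Prod.ext_iff, Fin.ext_iff]
        omega
      · refine ⟨⟨2*a.1 + 2, by omega⟩, ?_⟩
        have he : (⟨2*a.1+2, by omega⟩ : Fin (2*N)) = i0 ⟨a.1+1, by omega⟩ :=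
          Fin.ext (by simp [i0]; omega)
        rw [he, sfun_i0, e0', if_neg (by (try simp only [Fin.val_mk]); try omega)]
        simp [Prod.ext_iff, Fin.ext_iff]
    · by_cases h1 : a.1 = 0
      · refine ⟨⟨0, by omega⟩, ?_⟩
        have he : (⟨0, by omega⟩ : Fin (2*N)) = i0 ⟨0, by omega⟩ :=
          Fin.ext (by simp [i0])
        rw [he, sfun_i0, e0', if_pos (by (try simp only [Fin.val_mk]); try omega)]
        simp [Prod.ext_iff, Fin.ext_iff]
        omega
      · refine ⟨⟨2*a.1 - 1, by omega⟩, ?_⟩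
        have he : (⟨2*a.1-1, by omega⟩ : Fin (2*N)) = i1 ⟨a.1-1, by omega⟩ :=
          Fin.ext (by simp [i1]; omega)
        rw [he, sfun_i1, e1', dif_neg (by (try simp only [Fin.val_mk]); try omega)]
        simp [Prod.ext_iff, Fin.ext_iff]
        omega
  have hσs : σd = pt N p ε ∘ sfun N := by
    apply Set.range_injOn_strictAnti hσd hanti
    rw [hσr, PiAll, Set.range_comp, hsurj.range_eq, Set.image_univ]
  have hp0 : ∀ k : Fin N, σd (i0 k) = pt N p ε (e0' N k) := by
    intro k; rw [hσs]; simp only [Function.comp_apply, sfun_i0]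
  have hp1 : ∀ k : Fin N, σd (i1 k) = pt N p ε (e1' N k) := by
    intro k; rw [hσs]; simp only [Function.comp_apply, sfun_i1]
  have hadj : ∀ u v, (Gsig N p ε σd).Adj u v ↔ u ≠ v ∧ (u.1 = v.1 ∨
      ∃ k : Fin N, (u = e0' N k ∧ v = e1' N k) ∨ (u = e1' N k ∧ v = e0' N k)) := by
    intro u v
    have hpair : ∀ a b : Fin N × Bool,
        (∃ k : Fin N, ({pt N p ε a, pt N p ε b} : Set ℝ) = {σd (i0 k), σd (i1 k)}) ↔
        ∃ k : Fin N, (a = e0' N k ∧ b = e1' N k) ∨ (a = e1' N k ∧ b = e0' N k) := by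
      intro a b
      constructor
      · rintro ⟨k, hk⟩
        rw [hp0, hp1, Set.pair_eq_pair_iff] at hk
        refine ⟨k, ?_⟩
        rcases hk with ⟨h1, h2⟩ | ⟨h1, h2⟩
        · exact Or.inl ⟨hinj h1, hinj h2⟩
        · exact Or.inr ⟨hinj h1, hinj h2⟩
      · rintro ⟨k, ⟨h1, h2⟩ | ⟨h1, h2⟩⟩
        · exact ⟨k, by rw [hp0, hp1, h1, h2]⟩
        · exact ⟨k, by rw [hp0, hp1, h1, h2, Set.pair_comm]⟩
    simp only [Gsig, SimpleGraph.fromRel_adj]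
    constructor
    · rintro ⟨hne, h | h⟩
      · refine ⟨hne, ?_⟩
        rcases h with h | h
        · exact Or.inl h
        · exact Or.inr ((hpair u v).mp h)
      · refine ⟨hne, ?_⟩
        rcases h with h | h
        · exact Or.inl h.symm
        · rcases (hpair v u).mp h with ⟨k, hk⟩
          refine Or.inr ⟨k, ?_⟩
          tauto
    · rintro ⟨hne, h | h⟩
      · exact ⟨hne, Or.inl (Or.inl h)⟩
      · exact ⟨hne, Or.inl (Or.inr ((hpair u v).mpr h))⟩
  have hq : ∀ u v, (Gsig N p ε σd).Adj u v ↔ v = (u.1, !u.2) ∨ v = qv N hN u := by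
    intro u v
    rw [hadj]
    constructor
    · rintro ⟨hne, h | ⟨k, ⟨hu, hv⟩ | ⟨hu, hv⟩⟩⟩
      · left
        have h2 : u.2 ≠ v.2 := fun hb => hne (Prod.ext h hb)
        obtain ⟨a, b⟩ := u; obtain ⟨c, d⟩ := v
        simp only at h h2
        subst h
        cases b <;> cases d <;> simp_all
      · right; rw [hv, hu, qv_e0]
      · right; rw [hv, hu, qv_e1]
    · rintro (rfl | rfl)
      · refine ⟨?_, Or.inl rfl⟩
        obtain ⟨a, b⟩ := u; cases b <;> simp
      · exact ⟨fun h => qv_ne N hN u h.symm, Or.inr (qv_pair N hN u)⟩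
  have sibAdj : ∀ a : Fin N, (Gsig N p ε σd).Adj (a, true) (a, false) :=
    fun a => (hq _ _).mpr (Or.inl rfl)
  have reg : ∀ v, ((Gsig N p ε σd).neighborSet v).ncard = 2 := by
    intro v
    have hset : (Gsig N p ε σd).neighborSet v = {(v.1, !v.2), qv N hN v} := by
      ext w
      rw [SimpleGraph.mem_neighborSet, hq]
      simp [Set.mem_insert_iff]
    rw [hset]
    exact Set.ncard_pair (Ne.symm (qv_ne_sib N hN v))
  have key : ∀ n (hn : n < N),
      (Gsig N p ε σd).Reachable (⟨0, by omega⟩, true) (⟨n, hn⟩, true) := by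
    intro n
    induction n using Nat.strong_induction_on with
    | _ n ih =>
      intro hn
      by_cases g0 : n = 0
      · subst g0
        exact SimpleGraph.Reachable.refl _
      · by_cases g1 : n = 1
        · subst g1
          apply SimpleGraph.Adj.reachable
          rw [hq]
          right
          simp [qv, Prod.ext_iff, Fin.ext_iff]
        · have r1 := ih (n-2) (by omega) (by omega)
          have r2 : (Gsig N p ε σd).Reachable (⟨0, by omega⟩, true) (⟨n-2, by omega⟩, false) :=
            r1.trans (sibAdj ⟨n-2, by omega⟩).reachable
          refine r2.trans (SimpleGraph.Adj.reachable ?_)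
          rw [hq]
          right
          simp only [qv]
          rw [dif_neg (by (try simp only [Fin.val_mk]); try omega), dif_neg (by (try simp only [Fin.val_mk]); try omega)]
          simp [Prod.ext_iff, Fin.ext_iff]
          omega
  have conn : (Gsig N p ε σd).Connected := by
    rw [SimpleGraph.connected_iff]
    refine ⟨?_, ⟨(⟨0, by omega⟩, true)⟩⟩
    have reach : ∀ v : Fin N × Bool, (Gsig N p ε σd).Reachable (⟨0, by omega⟩, true) v := by
      rintro ⟨a, b⟩
      have hr := key a.1 a.2
      rw [Fin.eta] at hr
      cases b
      · exact hr.trans (sibAdj a).reachable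
      · exact hr
    intro u v
    exact (reach u).symm.trans (reach v)
  have hm1 : ∀ (A : Finset (Fin N)) (v : Fin N × Bool),
      (pt N p ε v ∈ Pi1 N p ε A ↔ (v.1 ∈ A ↔ v.2 = true)) := by
    intro A v
    simp only [Pi1, Set.mem_setOf_eq]
    constructor
    · rintro ⟨k, ⟨hk, he⟩ | ⟨hk, he⟩⟩
      · rw [hinj he]; simp [hk]
      · rw [hinj he]; simp [hk]
    · intro h
      obtain ⟨a, b⟩ := v
      cases b
      · exact ⟨a, Or.inr ⟨by simpa using h, rfl⟩⟩
      · exact ⟨a, Or.inl ⟨by simpa using h, rfl⟩⟩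
  have hsubP : ∀ (A : Finset (Fin N)) (k : Fin N) (y : Bool),
      (({σd (i0 k), σd (i1 k)} : Set ℝ) ⊆ PiY N p ε A y) ↔
      (if y then (((e0' N k).1 ∈ A ↔ (e0' N k).2 = true) ∧ ((e1' N k).1 ∈ A ↔ (e1' N k).2 = true))
       else (¬((e0' N k).1 ∈ A ↔ (e0' N k).2 = true) ∧
         ¬((e1' N k).1 ∈ A ↔ (e1' N k).2 = true))) := by
    intro A k y
    rw [Set.insert_subset_iff, Set.singleton_subset_iff, hp0, hp1]
    cases y
    · simp only [PiY, Bool.false_eq_true, if_false, Pi0, Set.mem_diff, if_neg]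
      rw [hm1, hm1]
      simp only [PiAll, Set.mem_range_self, true_and]
    · simp only [PiY, if_true]
      rw [hm1, hm1]
      try simp
  have hPR2 : ∀ A : Finset (Fin N), PR N p ε σd A ↔
      ∀ k : Fin N, (((e0' N k).1 ∈ A ↔ (e0' N k).2 = true) ↔
        ¬((e1' N k).1 ∈ A ↔ (e1' N k).2 = true)) := by
    intro A
    constructor
    · intro h k
      have ht := h k true
      have hf := h k false
      rw [hsubP] at ht hf
      simp only [if_true, Bool.false_eq_true, if_false] at ht hf
      tauto
    · intro h k y
      rw [hsubP]
      have := h k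
      cases y
      · simp only [Bool.false_eq_true, if_false]
        tauto
      · simp only [if_true]
        tauto
  refine ⟨conn, reg, ?_⟩
  ext A
  simp only [Set.mem_setOf_eq, Set.mem_insert_iff, Set.mem_singleton_iff]
  rw [hPR2]
  have hAZZmem : ∀ j : Fin N, (j ∈ AZZ N ↔ j.1 % 2 = 0) := fun j => by simp [AZZ]
  constructor
  · intro h
    have hstep : ∀ n (hn : n < N), 2 ≤ n →
        ((⟨n-2, by omega⟩ : Fin N) ∈ A ↔ (⟨n, hn⟩ : Fin N) ∈ A) := by
      intro n hn h2
      have hn1 : n - 1 < N := by omega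
      have hn2 : n - 2 < N := by omega
      have E0 : e0' N ⟨n-1, hn1⟩ = (⟨n-2, hn2⟩, false) := by
        rw [e0', if_neg (by simp only [Fin.val_mk]; omega)]
        simp [Prod.ext_iff, Fin.ext_iff]
        omega
      have E1 : e1' N ⟨n-1, hn1⟩ = (⟨n, hn⟩, true) := by
        rw [e1', dif_neg (by simp only [Fin.val_mk]; omega)]
        simp [Prod.ext_iff, Fin.ext_iff]
        omega
      have hc := h ⟨n-1, hn1⟩
      rw [E0, E1] at hc
      simp only at hc
      tauto
    have h01 : ((⟨0, by omega⟩ : Fin N) ∈ A ↔ ¬(⟨1, by omega⟩ : Fin N) ∈ A) := by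
      have h0N : (0:ℕ) < N := by omega
      have E0 : e0' N ⟨0, h0N⟩ = (⟨0, h0N⟩, true) := by
        rw [e0', if_pos (by simp only [Fin.val_mk])]
      have E1 : e1' N ⟨0, h0N⟩ = (⟨1, by omega⟩, true) := by
        rw [e1', dif_neg (by simp only [Fin.val_mk]; omega)]
      have hc := h ⟨0, h0N⟩
      rw [E0, E1] at hc
      simp only at hc
      tauto
    have hpar : ∀ n (hn : n < N),
        ((⟨n, hn⟩ : Fin N) ∈ A ↔ (n % 2 = 0 ↔ (⟨0, by omega⟩ : Fin N) ∈ A)) := by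
      intro n
      induction n using Nat.strong_induction_on with
      | _ n ih =>
        intro hn
        by_cases g0 : n = 0
        · subst g0; simp
        · by_cases g1 : n = 1
          · subst g1
            simp only [Nat.one_mod]
            constructor
            · intro hh
              constructor
              · intro h1; omega
              · intro h0; exact absurd hh (by tauto)
            · intro hh
              by_contra hne
              have := h01.mpr hne
              have : (1 : ℕ) % 2 = 0 := by tauto
              omega
          · have hs := hstep n hn (by omega)
            have hih := ih (n-2) (by omega) (by omega)
            rw [← hs, hih, show (n-2) % 2 = n % 2 from by omega]
    by_cases hA0 : (⟨0, by omega⟩ : Fin N) ∈ A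
    · left
      ext j
      rw [hAZZmem j]
      have hj := hpar j.1 j.2
      rw [Fin.eta] at hj
      by_cases hpj : j.1 % 2 = 0 <;> simp [hpj] at hj <;> tauto
    · right
      ext j
      rw [Finset.mem_compl, hAZZmem j]
      have hj := hpar j.1 j.2
      rw [Fin.eta] at hj
      by_cases hpj : j.1 % 2 = 0 <;> simp [hpj] at hj <;> tauto
  · intro hA k
    have hk := k.isLt
    rcases hA with rfl | rfl
    · by_cases h0 : k.1 = 0
      · rw [e0', if_pos h0, e1', dif_neg (by omega)]
        simp only [hAZZmem, Fin.val_mk]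
        simp
        omega
      · by_cases h1 : k.1 = N - 1
        · rw [e0', if_neg h0, e1', dif_pos h1]
          simp only [hAZZmem, Fin.val_mk]
          simp
          omega
        · rw [e0', if_neg h0, e1', dif_neg h1]
          simp only [hAZZmem, Fin.val_mk]
          simp
          omega
    · by_cases h0 : k.1 = 0
      · rw [e0', if_pos h0, e1', dif_neg (by omega)]
        simp only [Finset.mem_compl, hAZZmem, Fin.val_mk]
        simp
        omega
      · by_cases h1 : k.1 = N - 1
        · rw [e0', if_neg h0, e1', dif_pos h1]
          simp only [Finset.mem_compl, hAZZmem, Fin.val_mk]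
          simp
          omega
        · rw [e0', if_neg h0, e1', dif_neg h1]
          simp only [Finset.mem_compl, hAZZmem, Fin.val_mk]
          simp
          omega

end
end

section
/- Fix $M=3$. Given any NAE-3SAT instance with variables $x_1,\ldots,x_n$ and clauses $C_1,\ldots,C_m$, construct a system of difference modular disequations (DMDs) modulo 3 as follows: introduce integer variables $w_i,\hat w_i$ for each $x_i$, a common variable $s$, and a variable $c_j$ per clause; add disequations $w_i-s\not\equiv 0$, $\hat w_i-s\not\equiv 0$, $w_i-\hat w_i\not\equiv 0$, and for each clause $u\vee v\vee w$ the disequations $\delta(u)-c_j\not\equiv 0$, $\delta(v)-c_j\not\equiv 1$, $\delta(w)-c_j\not\equiv 2$, where $\delta(x_i)=w_i$, $\delta(\neg x_i)=\hat w_i$. Then the DMD system has a solution over $\mathbb{Z}_3$ if and only if the NAE-3SAT instance has a not-all-equal satisfying assignment. -/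
/-- The truth value of a literal `(v, s)` (`s = true` meaning the positive literal
`x_v`, `s = false` meaning `¬x_v`) under an assignment. -/
def litVal {ν : Type*} (a : ν → Bool) (l : ν × Bool) : Bool :=
  if l.2 then a l.1 else !(a l.1)

private lemma zmod3_cases (x : ZMod 3) : x = 0 ∨ x = 1 ∨ x = 2 := by
  revert x; decide

private lemma zmod3_two (x : ZMod 3) (hx : x ≠ 0) : x = 1 ∨ x = 2 := by
  revert hx; revert x; decide

private lemma key_c : ∀ bu bv bw : Bool, ¬(bu = bv ∧ bv = bw) →
    ∃ c : ZMod 3, (if bu then (2:ZMod 3) else 1) - c ≠ 0 ∧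
      (if bv then (2:ZMod 3) else 1) - c ≠ 1 ∧
      (if bw then (2:ZMod 3) else 1) - c ≠ 2 := by
  decide

/-- **(Statement 18.)** Correctness of the reduction from NAE-3SAT to a system of
difference modular disequations (DMDs) modulo 3: introduce `w_i, wHat_i` per variable,
a common variable `s`, and `c_j` per clause, with disequations
`w_i - s ≢ 0`, `wHat_i - s ≢ 0`, `w_i - wHat_i ≢ 0`, and for each clause `u ∨ v ∨ w`:
`δ(u) - c_j ≢ 0`, `δ(v) - c_j ≢ 1`, `δ(w) - c_j ≢ 2`, where `δ` maps a positive
literal on `x_i` to `w_i` and a negative one to `wHat_i`. The DMD system is solvable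
over `ℤ/3` iff the NAE-3SAT instance has a not-all-equal satisfying assignment. -/
theorem stmt18 {ν : Type*}
    (clauses : List ((ν × Bool) × (ν × Bool) × (ν × Bool))) :
    (∃ (w wHat : ν → ZMod 3) (s : ZMod 3) (c : Fin clauses.length → ZMod 3),
      (∀ i : ν, w i - s ≠ 0 ∧ wHat i - s ≠ 0 ∧ w i - wHat i ≠ 0) ∧
      (∀ j : Fin clauses.length,
        (fun δ : ν × Bool → ZMod 3 =>
          δ (clauses.get j).1 - c j ≠ 0 ∧
          δ (clauses.get j).2.1 - c j ≠ 1 ∧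
          δ (clauses.get j).2.2 - c j ≠ 2)
        (fun l => if l.2 then w l.1 else wHat l.1))) ↔
      (∃ a : ν → Bool, ∀ cl ∈ clauses,
        ¬(litVal a cl.1 = litVal a cl.2.1 ∧ litVal a cl.2.1 = litVal a cl.2.2)) := by
  constructor
  · rintro ⟨w, wHat, s, c, hvar, hcl⟩
    refine ⟨fun v => decide (w v - s = 2), ?_⟩
    set δ : ν × Bool → ZMod 3 := fun l => if l.2 then w l.1 else wHat l.1 with hδ
    set a : ν → Bool := fun v => decide (w v - s = 2) with ha
    -- litVal a l = decide (δ l - s = 2)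
    have hlit : ∀ l : ν × Bool, litVal a l = decide (δ l - s = 2) := by
      intro ⟨v, b⟩
      obtain ⟨h1, h2, h3⟩ := hvar v
      have hw := zmod3_two _ h1
      have hwh := zmod3_two _ h2
      have hne : w v - s ≠ wHat v - s := by
        intro h
        apply h3
        have h' : w v - s - (wHat v - s) = 0 := by rw [h]; ring
        linear_combination h'
      cases b <;>
        rcases hw with hw | hw <;> rcases hwh with hwh | hwh <;>
          first
            | exact absurd (hw.trans hwh.symm) hne
            | (simp [litVal, δ, a, hw, hwh]; try decide)
    intro cl hcl_mem
    obtain ⟨j, hj⟩ := List.mem_iff_get.mp hcl_mem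
    rintro ⟨e1, e2⟩
    obtain ⟨g1, g2, g3⟩ := hcl j
    rw [hj] at g1 g2 g3
    -- from equal litVals deduce equal δ values
    have hdeq : ∀ l l' : ν × Bool, litVal a l = litVal a l' → δ l = δ l' := by
      intro l l' h
      rw [hlit l, hlit l'] at h
      have h1 : δ l - s ≠ 0 := by
        rcases l with ⟨v, b⟩
        obtain ⟨q1, q2, _⟩ := hvar v
        cases b <;> simpa [δ] using (by assumption : _)
      have h1' : δ l' - s ≠ 0 := by
        rcases l' with ⟨v, b⟩
        obtain ⟨q1, q2, _⟩ := hvar v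
        cases b <;> simpa [δ] using (by assumption : _)
      have := zmod3_two _ h1
      have := zmod3_two _ h1'
      have hds : δ l - s = δ l' - s := by
        rcases ‹δ l - s = 1 ∨ δ l - s = 2› with p | p <;>
          rcases ‹δ l' - s = 1 ∨ δ l' - s = 2› with q | q <;>
            rw [p, q] at h ⊢ <;>
              first
                | rfl
                | exact absurd h (by decide)
      linear_combination hds
    have d1 := hdeq _ _ e1
    have d2 := hdeq _ _ e2
    rw [d1, d2] at g1
    rw [d2] at g2
    rcases zmod3_cases (δ cl.2.2 - c j) with h | h | h
    exacts [g1 h, g2 h, g3 h]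
  · rintro ⟨a, hna⟩
    have hc : ∀ j : Fin clauses.length, ∃ cv : ZMod 3,
        (if litVal a (clauses.get j).1 then (2:ZMod 3) else 1) - cv ≠ 0 ∧
        (if litVal a (clauses.get j).2.1 then (2:ZMod 3) else 1) - cv ≠ 1 ∧
        (if litVal a (clauses.get j).2.2 then (2:ZMod 3) else 1) - cv ≠ 2 :=
      fun j => key_c _ _ _ (hna _ (clauses.get_mem j))
    choose c hc using hc
    refine ⟨fun v => if a v then 2 else 1, fun v => if a v then 1 else 2, 0, c,
      fun v => ?_, fun j => ?_⟩
    · cases hv : a v <;> simp only [hv] <;> decide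
    · have hδ : ∀ l : ν × Bool,
          (if l.2 then (if a l.1 then (2:ZMod 3) else 1) else (if a l.1 then 1 else 2))
            = (if litVal a l then (2:ZMod 3) else 1) := by
        intro ⟨v, b⟩
        cases b <;> cases hv : a v <;> simp [litVal, hv]
      simp only [hδ]
      exact hc j
end
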